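/- arXiv:1001.5185 — 6 statements merged into one kernel-verified Lean document; each statement's English description precedes it below -/
import Mathlib

section
/- Let W be a block positive Hermitian matrix on ℂ^m⊗ℂ^m and let ψ = Σ_{i=1}^m √μ_i a_i⊗b_i be a Schmidt decomposition of a unit vector ψ. If A_{kl}^{(W)}(ψ) ≥ −1 for all k ≠ l, then −⟨ψ, Wψ⟩ ≤ Σ_{i≠j} √(μ_i μ_j). -/
open scoped BigOperators ComplexConjugate ComplexOrder
open Finset Matrix

noncomputable section

/-- Tensor product `a⊗b` of two vectors, `(a⊗b)(x,y) = aₓ·b_y`. -/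
def tp {m n : ℕ} (a : Fin m → ℂ) (b : Fin n → ℂ) : Fin m × Fin n → ℂ :=
  fun p => a p.1 * b p.2

/-- The standard Hermitian inner product `⟨f,g⟩ = ∑ i, conj (f i) * g i`. -/
def hip {ι : Type} [Fintype ι] (f g : ι → ℂ) : ℂ := ∑ i, conj (f i) * g i

/-- An orthonormal family of vectors. -/
def Onb {m r : ℕ} (a : Fin r → Fin m → ℂ) : Prop :=
  ∀ i j, hip (a i) (a j) = if i = j then 1 else 0

/-- `IsSchmidt ψ a b μ` : `ψ = ∑ i, √μᵢ aᵢ⊗bᵢ` is a Schmidt decomposition of `ψ`. -/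
def IsSchmidt {m : ℕ} (ψ : Fin m × Fin m → ℂ)
    (a b : Fin m → Fin m → ℂ) (μ : Fin m → ℝ) : Prop :=
  Onb a ∧ Onb b ∧ (∀ i, 0 ≤ μ i) ∧ ∑ i, μ i = 1 ∧
  ψ = fun p => ∑ i, (Real.sqrt (μ i) : ℂ) * tp (a i) (b i) p

/-- `A_{kl}^{(W)}(ψ) = Re⟨a_k⊗b_k, W(a_l⊗b_l)⟩`. -/
def Acoef {m : ℕ} (W : Matrix (Fin m × Fin m) (Fin m × Fin m) ℂ)
    (a b : Fin m → Fin m → ℂ) (k l : Fin m) : ℝ :=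
  (hip (tp (a k) (b k)) (W.mulVec (tp (a l) (b l)))).re

/-- Block positivity: `⟨a⊗b, W(a⊗b)⟩ ≥ 0` for all `a`, `b`. -/
def BlockPos {m : ℕ} (W : Matrix (Fin m × Fin m) (Fin m × Fin m) ℂ) : Prop :=
  ∀ a b : Fin m → ℂ, 0 ≤ (hip (tp a b) (W.mulVec (tp a b))).re

/-- The reduced matrix `ρ_A` of a vector `ψ`. -/
def rhoA {m n : ℕ} (ψ : Fin m × Fin n → ℂ) : Matrix (Fin m) (Fin m) ℂ :=
  Matrix.of fun x y => ∑ z, ψ (x, z) * conj (ψ (y, z))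

/-- Concurrence of a pure state: `C(ψ) = √(2(1 − Tr ρ_A²))`. -/
def concP {m n : ℕ} (ψ : Fin m × Fin n → ℂ) : ℝ :=
  Real.sqrt (2 * (1 - (Matrix.trace (rhoA ψ * rhoA ψ)).re))

/-- Convex-roof concurrence of a mixed state. -/
def concM {m n : ℕ} (ρ : Matrix (Fin m × Fin n) (Fin m × Fin n) ℂ) : ℝ :=
  sInf { c : ℝ | ∃ (N : ℕ) (p : Fin N → ℝ) (ψ : Fin N → (Fin m × Fin n → ℂ)),
    (∀ i, 0 < p i) ∧ ∑ i, p i = 1 ∧ (∀ i, hip (ψ i) (ψ i) = 1) ∧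
    ρ = ∑ i, (p i : ℂ) • Matrix.of (fun x y => ψ i x * conj (ψ i y)) ∧
    c = ∑ i, p i * concP (ψ i) }

lemma hip_sum_right' {ι κ : Type} [Fintype ι] [Fintype κ] (f : ι → ℂ)
    (g : κ → ι → ℂ) : hip f (∑ j, g j) = ∑ j, hip f (g j) := by
  simp [hip, Finset.sum_apply, Finset.mul_sum]
  exact Finset.sum_comm

lemma hip_sum_left' {ι κ : Type} [Fintype ι] [Fintype κ] (f : ι → ℂ)
    (g : κ → ι → ℂ) : hip (∑ j, g j) f = ∑ j, hip (g j) f := by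
  simp [hip, Finset.sum_apply, Finset.sum_mul]
  exact Finset.sum_comm

lemma hip_smul_right' {ι : Type} [Fintype ι] (c : ℂ) (f g : ι → ℂ) :
    hip f (c • g) = c * hip f g := by
  simp [hip, Finset.mul_sum]
  exact Finset.sum_congr rfl fun i _ => by ring

lemma hip_smul_left' {ι : Type} [Fintype ι] (c : ℂ) (f g : ι → ℂ) :
    hip (c • g) f = conj c * hip g f := by
  simp [hip, Finset.mul_sum]
  exact Finset.sum_congr rfl fun i _ => by ring

/-- For a block positive Hermitian `W` and a Schmidt decomposition
`ψ = ∑ᵢ √μᵢ aᵢ⊗bᵢ` of a unit vector: if `A_{kl}^{(W)}(ψ) ≥ −1` for all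
`k ≠ l`, then `−⟨ψ, Wψ⟩ ≤ ∑_{i≠j} √(μᵢ μⱼ)`. -/
theorem stmt4 {m : ℕ} (W : Matrix (Fin m × Fin m) (Fin m × Fin m) ℂ)
    (hW : W.IsHermitian) (hBP : BlockPos W)
    (ψ : Fin m × Fin m → ℂ) (a b : Fin m → Fin m → ℂ) (μ : Fin m → ℝ)
    (hunit : hip ψ ψ = 1) (hS : IsSchmidt ψ a b μ)
    (hA : ∀ k l, k ≠ l → -1 ≤ Acoef W a b k l) :
    -(hip ψ (W.mulVec ψ)).re
      ≤ ∑ i, ∑ j, (if i ≠ j then Real.sqrt (μ i * μ j) else 0) := by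
  obtain ⟨ha, hb, hμ, hsum, hψ⟩ := hS
  have hψ' : ψ = ∑ k, ((Real.sqrt (μ k) : ℂ) • tp (a k) (b k)) := by
    funext p
    simp [hψ, Finset.sum_apply]
  have hmv : W.mulVec ψ = ∑ l, ((Real.sqrt (μ l) : ℂ) • W.mulVec (tp (a l) (b l))) := by
    rw [hψ']
    rw [show W.mulVec (∑ k, ((Real.sqrt (μ k) : ℂ) • tp (a k) (b k)))
        = W.mulVecLin (∑ k, ((Real.sqrt (μ k) : ℂ) • tp (a k) (b k))) from rfl]
    rw [map_sum]
    simp [Matrix.mulVecLin_apply, Matrix.mulVec_smul]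
  have key : hip ψ (W.mulVec ψ)
      = ∑ k, ∑ l, ((Real.sqrt (μ k) : ℂ) * (Real.sqrt (μ l) : ℂ)
          * hip (tp (a k) (b k)) (W.mulVec (tp (a l) (b l)))) := by
    rw [hmv]
    conv_lhs => rw [hψ']
    rw [hip_sum_left']
    refine Finset.sum_congr rfl fun k _ => ?_
    rw [hip_smul_left', hip_sum_right', Complex.conj_ofReal, Finset.mul_sum]
    refine Finset.sum_congr rfl fun l _ => ?_
    rw [hip_smul_right']; ring
  have hre : (hip ψ (W.mulVec ψ)).re
      = ∑ k, ∑ l, Real.sqrt (μ k) * Real.sqrt (μ l) * Acoef W a b k l := by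
    rw [key]
    rw [Complex.re_sum]
    refine Finset.sum_congr rfl fun k _ => ?_
    rw [Complex.re_sum]
    refine Finset.sum_congr rfl fun l _ => ?_
    rw [← Complex.ofReal_mul, Complex.re_ofReal_mul]
    rfl
  have hlow : ∑ i, ∑ j, (if i ≠ j then -Real.sqrt (μ i * μ j) else 0)
      ≤ (hip ψ (W.mulVec ψ)).re := by
    rw [hre]
    refine Finset.sum_le_sum fun k _ => Finset.sum_le_sum fun l _ => ?_
    by_cases h : k = l
    · subst h
      simp only [ne_eq, not_true_eq_false, if_false]
      exact mul_nonneg (mul_nonneg (Real.sqrt_nonneg _) (Real.sqrt_nonneg _)) (hBP (a k) (b k))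
    · simp only [ne_eq, h, not_false_eq_true, if_true]
      have h1 : -Real.sqrt (μ k * μ l) = Real.sqrt (μ k) * Real.sqrt (μ l) * (-1) := by
        rw [Real.sqrt_mul (hμ k)]; ring
      rw [h1]
      exact mul_le_mul_of_nonneg_left (hA k l h)
        (mul_nonneg (Real.sqrt_nonneg _) (Real.sqrt_nonneg _))
  have hEq : -∑ i, ∑ j, (if i ≠ j then -Real.sqrt (μ i * μ j) else 0)
      = ∑ i, ∑ j, (if i ≠ j then Real.sqrt (μ i * μ j) else 0) := by
    rw [← Finset.sum_neg_distrib]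
    refine Finset.sum_congr rfl fun i _ => ?_
    rw [← Finset.sum_neg_distrib]
    refine Finset.sum_congr rfl fun j _ => ?_
    by_cases h : i = j <;> simp [h]
  rw [← hEq]
  exact neg_le_neg hlow

end
end

section
/- (Breuer's theorem.) Let W be a block positive Hermitian matrix on ℂ^m⊗ℂ^m such that −⟨ψ, Wψ⟩ ≤ Σ_{i≠j} √(μ_i μ_j) for every unit vector ψ ∈ ℂ^m⊗ℂ^m with Schmidt coefficients μ_i. Let ρ be a density matrix on ℂ^m⊗ℂ^m with Tr(ρW) < 0. Then for every pure-state decomposition ρ = Σ_i p_i |ψ_i⟩⟨ψ_i| (p_i > 0, Σ_i p_i = 1, ψ_i unit vectors), one has Σ_i p_i C(ψ_i) ≥ √(2/(m(m−1))) · |Tr(ρW)|; consequently the convex-roof concurrence satisfies C(ρ) ≥ √(2/(m(m−1))) · |Tr(ρW)|. -/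
open scoped BigOperators ComplexConjugate ComplexOrder
open Finset Matrix

noncomputable section

lemma hip_eq_inner {m : ℕ} (f g : Fin m → ℂ) :
    hip f g = @inner ℂ (EuclideanSpace ℂ (Fin m)) _ (WithLp.toLp 2 f) (WithLp.toLp 2 g) := by
  simp [hip, PiLp.inner_apply, RCLike.inner_apply, mul_comm]

lemma rhoA_psd {m : ℕ} (ψ : Fin m × Fin m → ℂ) : (rhoA ψ).PosSemidef := by
  have : rhoA ψ = (Matrix.of fun x z => ψ (x, z)) * (Matrix.of fun x z => ψ (x, z))ᴴ := by
    ext x y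
    simp [rhoA, Matrix.mul_apply, Matrix.conjTranspose_apply]
  rw [this]
  exact Matrix.posSemidef_self_mul_conjTranspose _

lemma schmidt_exists {m : ℕ} (ψ : Fin m × Fin m → ℂ) (hψ : hip ψ ψ = 1) :
    ∃ a b μ, IsSchmidt ψ a b μ ∧
      (Matrix.trace (rhoA ψ * rhoA ψ)).re = ∑ i, (μ i)^2 := by
  classical
  set M : Matrix (Fin m) (Fin m) ℂ := Matrix.of (fun x z => ψ (x, z)) with hMdef
  have hrhoA : rhoA ψ = M * Mᴴ := by
    ext x y
    simp [rhoA, Matrix.mul_apply, Matrix.conjTranspose_apply, hMdef]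
  have hPSD := rhoA_psd ψ
  have hH : (rhoA ψ).IsHermitian := hPSD.1
  set μ : Fin m → ℝ := hH.eigenvalues with hμdef
  set U : Matrix (Fin m) (Fin m) ℂ := (hH.eigenvectorUnitary : Matrix (Fin m) (Fin m) ℂ) with hUdef
  have hUU : Uᴴ * U = 1 := by
    rw [← Matrix.star_eq_conjTranspose]
    exact (Matrix.mem_unitaryGroup_iff').mp hH.eigenvectorUnitary.2
  have hUU' : U * Uᴴ = 1 := by
    rw [← Matrix.star_eq_conjTranspose]
    exact (Matrix.mem_unitaryGroup_iff).mp hH.eigenvectorUnitary.2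
  set a : Fin m → Fin m → ℂ := fun i x => U x i with hadef
  have hOa : Onb a := by
    intro i j
    have : hip (a i) (a j) = (Uᴴ * U) i j := by
      simp [hip, Matrix.mul_apply, Matrix.conjTranspose_apply, hadef]
    rw [this, hUU, Matrix.one_apply]
  have hdiag : Uᴴ * (rhoA ψ) * U = Matrix.diagonal (RCLike.ofReal ∘ μ) := by
    rw [← Matrix.star_eq_conjTranspose]
    have h := hH.conjStarAlgAut_star_eigenvectorUnitary
    rw [Unitary.conjStarAlgAut_star_apply] at h
    exact h
  set C : Matrix (Fin m) (Fin m) ℂ := Uᴴ * M with hCdef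
  set c : Fin m → Fin m → ℂ := fun i y => C i y with hcdef
  have hCC : C * Cᴴ = Matrix.diagonal (RCLike.ofReal ∘ μ) := by
    rw [hCdef, Matrix.conjTranspose_mul, Matrix.conjTranspose_conjTranspose, ← hdiag, hrhoA]
    noncomm_ring
  have hcc : ∀ i j, hip (c i) (c j) = if j = i then (μ i : ℂ) else 0 := by
    intro i j
    have h1 : hip (c i) (c j) = (C * Cᴴ) j i := by
      simp [hip, Matrix.mul_apply, Matrix.conjTranspose_apply, hcdef, mul_comm]
    rw [h1, hCC]
    rcases eq_or_ne j i with h | h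
    · simp [h, Matrix.diagonal_apply, Function.comp]
    · simp [h, Matrix.diagonal_apply_ne _ h]
  have hMUC : M = U * C := by
    rw [hCdef, ← Matrix.mul_assoc, hUU', Matrix.one_mul]
  have hexp : ∀ x y, ψ (x, y) = ∑ i, a i x * c i y := by
    intro x y
    have : ψ (x, y) = M x y := rfl
    rw [this, hMUC, Matrix.mul_apply]
  -- nonnegativity and sum of eigenvalues
  have hμ0 : ∀ i, 0 ≤ μ i := fun i => hPSD.eigenvalues_nonneg i
  have htr1 : Matrix.trace (rhoA ψ) = 1 := by
    have h0 : Matrix.trace (rhoA ψ) = hip ψ ψ := by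
      simp only [Matrix.trace, Matrix.diag, rhoA, Matrix.of_apply, hip, Fintype.sum_prod_type]
      exact Finset.sum_congr rfl fun x _ => Finset.sum_congr rfl fun z _ => mul_comm _ _
    rw [h0, hψ]
  have htrdiag : Matrix.trace (rhoA ψ) = ∑ i, (μ i : ℂ) := by
    have h2 : Matrix.trace (Uᴴ * (rhoA ψ) * U) = Matrix.trace (rhoA ψ) := by
      rw [Matrix.trace_mul_cycle, hUU', Matrix.one_mul]
    rw [← h2, hdiag, Matrix.trace_diagonal]
    rfl
  have hμsum : ∑ i, μ i = 1 := by
    have h := htrdiag.symm.trans htr1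
    exact_mod_cast h
  -- trace of square
  set D : Matrix (Fin m) (Fin m) ℂ := Matrix.diagonal (RCLike.ofReal ∘ μ) with hDdef
  have hspec : rhoA ψ = U * D * Uᴴ := by
    rw [hDdef, ← Matrix.star_eq_conjTranspose]
    exact hH.spectral_theorem
  have hsq : rhoA ψ * rhoA ψ = U * (D * D) * Uᴴ := by
    rw [hspec]
    simp only [Matrix.mul_assoc]
    rw [← Matrix.mul_assoc Uᴴ U (D * Uᴴ), hUU, Matrix.one_mul]
  have htrsq : (Matrix.trace (rhoA ψ * rhoA ψ)).re = ∑ i, (μ i)^2 := by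
    rw [hsq, Matrix.trace_mul_cycle, hUU, Matrix.one_mul, hDdef,
      Matrix.diagonal_mul_diagonal, Matrix.trace_diagonal]
    rw [Complex.re_sum]
    refine Finset.sum_congr rfl fun i _ => ?_
    simp [Function.comp, ← Complex.ofReal_mul, pow_two]
  -- build the b family by normalizing c on nonzero eigenvalues and extending
  set sset : Set (Fin m) := {i | μ i ≠ 0} with hsset
  set v : Fin m → EuclideanSpace ℂ (Fin m) :=
    fun i => ((Real.sqrt (μ i) : ℂ))⁻¹ • (WithLp.equiv 2 (Fin m → ℂ)).symm (c i) with hvdef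
  have hcinner : ∀ i j, @inner ℂ (EuclideanSpace ℂ (Fin m)) _
      ((WithLp.equiv 2 (Fin m → ℂ)).symm (c i)) ((WithLp.equiv 2 (Fin m → ℂ)).symm (c j))
      = hip (c i) (c j) := by
    intro i j
    simp [PiLp.inner_apply, RCLike.inner_apply, hip, mul_comm]
  have hv : Orthonormal ℂ (sset.restrict v) := by
    rw [orthonormal_iff_ite]
    rintro ⟨i, hi⟩ ⟨j, hj⟩
    simp only [Set.restrict_apply, Set.restrict, hvdef]
    rw [inner_smul_left, inner_smul_right, hcinner, hcc]
    have hμi : 0 < μ i := lt_of_le_of_ne (hμ0 i) (Ne.symm hi)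
    have hμj : 0 < μ j := lt_of_le_of_ne (hμ0 j) (Ne.symm hj)
    have hsi : (Real.sqrt (μ i) : ℂ) ≠ 0 := by
      simp [Real.sqrt_eq_zero', not_le, hμi, ne_of_gt hμi]
    have hsj : (Real.sqrt (μ j) : ℂ) ≠ 0 := by
      simp [Real.sqrt_eq_zero', not_le, hμj, ne_of_gt hμj]
    rcases eq_or_ne i j with h | h
    · subst h
      simp only [if_pos rfl, if_true, eq_self_iff_true]
      rw [map_inv₀, Complex.conj_ofReal, ← mul_assoc, ← mul_inv, ← Complex.ofReal_mul,
        Real.mul_self_sqrt (hμ0 i)]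
      exact inv_mul_cancel₀ (Complex.ofReal_ne_zero.mpr hi)
    · have h2 : (⟨i, hi⟩ : sset) ≠ ⟨j, hj⟩ := by simp [h]
      rw [if_neg (fun hh => h hh.symm), if_neg h2]
      simp
  obtain ⟨b', hb'⟩ := hv.exists_orthonormalBasis_extension_of_card_eq
    (by simp : Module.finrank ℂ (EuclideanSpace ℂ (Fin m)) = Fintype.card (Fin m))
  set b : Fin m → Fin m → ℂ := fun i y => (WithLp.equiv 2 (Fin m → ℂ)) (b' i) y with hbdef
  have hOb : Onb b := by
    intro i j
    have := orthonormal_iff_ite.mp b'.orthonormal i j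
    rw [← this]
    simp [hip, hbdef, PiLp.inner_apply, RCLike.inner_apply, mul_comm]
  have hc0 : ∀ i, μ i = 0 → c i = 0 := by
    intro i h
    have h1 := hcc i i
    rw [if_pos rfl, h, Complex.ofReal_zero] at h1
    have h2 : ∑ y, Complex.normSq (c i y) = 0 := by
      have : ((∑ y, Complex.normSq (c i y) : ℝ) : ℂ) = 0 := by
        push_cast
        rw [← h1, hip]
        exact Finset.sum_congr rfl fun y _ => by
          rw [mul_comm, Complex.mul_conj]
      exact_mod_cast this
    funext y
    have := (Finset.sum_eq_zero_iff_of_nonneg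
      (fun y _ => Complex.normSq_nonneg (c i y))).mp h2 y (Finset.mem_univ y)
    exact Complex.normSq_eq_zero.mp this
  have hcb : ∀ i y, (Real.sqrt (μ i) : ℂ) * b i y = c i y := by
    intro i y
    rcases eq_or_ne (μ i) 0 with h | h
    · rw [h, hc0 i h]
      simp
    · have hi : i ∈ sset := h
      have hμi : 0 < μ i := lt_of_le_of_ne (hμ0 i) (Ne.symm h)
      have hsi : (Real.sqrt (μ i) : ℂ) ≠ 0 := by
        simp [Real.sqrt_eq_zero', not_le, hμi, ne_of_gt hμi]
      simp only [hbdef, hb' i hi, hvdef]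
      simp only [WithLp.equiv_apply, WithLp.equiv_symm_apply, WithLp.ofLp_smul, WithLp.ofLp_toLp, Pi.smul_apply, smul_eq_mul,
        Equiv.apply_symm_apply]
      rw [← mul_assoc, mul_inv_cancel₀ hsi, one_mul]
  refine ⟨a, b, μ, ⟨hOa, hOb, hμ0, hμsum, ?_⟩, htrsq⟩
  funext p
  rw [show p = (p.1, p.2) from rfl, hexp p.1 p.2]
  refine Finset.sum_congr rfl fun i _ => ?_
  rw [tp, ← hcb i p.2]
  ring

lemma offdiag_sum_eq {m : ℕ} (f : Fin m → Fin m → ℝ) :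
    (∑ i, ∑ j, if i ≠ j then f i j else 0)
      = ∑ p ∈ (Finset.univ : Finset (Fin m)).offDiag, f p.1 p.2 := by
  rw [← Finset.sum_product', ← Finset.sum_filter]
  congr 1
  ext p
  simp [Finset.mem_offDiag]

lemma perstate {m : ℕ} (W : Matrix (Fin m × Fin m) (Fin m × Fin m) ℂ)
    (hcond : ∀ (ψ : Fin m × Fin m → ℂ) (a b : Fin m → Fin m → ℂ) (μ : Fin m → ℝ),
      hip ψ ψ = 1 → IsSchmidt ψ a b μ →
      -(hip ψ (W.mulVec ψ)).re
        ≤ ∑ i, ∑ j, (if i ≠ j then Real.sqrt (μ i * μ j) else 0))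
    (ψ : Fin m × Fin m → ℂ) (hψ : hip ψ ψ = 1) :
    -(hip ψ (W.mulVec ψ)).re
      ≤ Real.sqrt (((m : ℝ) * ((m : ℝ) - 1)) / 2) * concP ψ := by
  obtain ⟨a, b, μ, hS, htr⟩ := schmidt_exists ψ hψ
  have h1 := hcond ψ a b μ hψ hS
  obtain ⟨hOa, hOb, hμ0, hμsum, hψeq⟩ := hS
  set S : ℝ := ∑ p ∈ (Finset.univ : Finset (Fin m)).offDiag, μ p.1 * μ p.2 with hSdef
  have hS0 : 0 ≤ S := Finset.sum_nonneg fun p _ => mul_nonneg (hμ0 _) (hμ0 _)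
  have hsplit : (1 : ℝ) = (∑ i, (μ i)^2) + S := by
    have e1 : ((∑ i, μ i))^2 = ∑ i, ∑ j, μ i * μ j := by
      rw [pow_two, Finset.sum_mul_sum]
    have e2 : ∀ i j : Fin m, μ i * μ j
        = (if i = j then μ i * μ j else 0) + (if i ≠ j then μ i * μ j else 0) := by
      intro i j; by_cases h : i = j <;> simp [h]
    have e3 : (∑ i, ∑ j, μ i * μ j)
        = (∑ i : Fin m, ∑ j, if i = j then μ i * μ j else 0)
          + (∑ i, ∑ j, if i ≠ j then μ i * μ j else 0) := by
      rw [← Finset.sum_add_distrib]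
      refine Finset.sum_congr rfl fun i _ => ?_
      rw [← Finset.sum_add_distrib]
      exact Finset.sum_congr rfl fun j _ => e2 i j
    have e4 : (∑ i : Fin m, ∑ j, if i = j then μ i * μ j else 0) = ∑ i, (μ i)^2 := by
      refine Finset.sum_congr rfl fun i _ => ?_
      rw [Finset.sum_ite_eq]
      simp [pow_two]
    calc (1 : ℝ) = ((∑ i, μ i))^2 := by rw [hμsum]; norm_num
    _ = _ := by rw [e1, e3, e4, offdiag_sum_eq, hSdef]
  have hconc : concP ψ = Real.sqrt (2 * S) := by
    rw [concP, htr]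
    congr 1
    linarith
  have hK0 : 0 ≤ (m : ℝ) * ((m : ℝ) - 1) := by
    rcases Nat.eq_zero_or_pos m with h | h
    · simp [h]
    · have : (1 : ℝ) ≤ (m : ℝ) := by exact_mod_cast h
      nlinarith
  have hT : (∑ i, ∑ j, if i ≠ j then Real.sqrt (μ i * μ j) else 0)
      ≤ Real.sqrt (((m : ℝ) * ((m : ℝ) - 1)) * S) := by
    rw [offdiag_sum_eq]
    set F := (Finset.univ : Finset (Fin m)).offDiag with hF
    have hsq : ∀ p ∈ F, (Real.sqrt (μ p.1 * μ p.2))^2 = μ p.1 * μ p.2 := by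
      intro p _
      exact Real.sq_sqrt (mul_nonneg (hμ0 _) (hμ0 _))
    have hcs := sq_sum_le_card_mul_sum_sq (s := F) (f := fun p => Real.sqrt (μ p.1 * μ p.2))
    rw [Finset.sum_congr rfl hsq] at hcs
    have hcard : ((F.card : ℝ)) ≤ (m : ℝ) * ((m : ℝ) - 1) := by
      rw [hF, Finset.offDiag_card]
      have hmm : m ≤ m * m := by
        cases m with
        | zero => simp
        | succ n => exact Nat.le_mul_of_pos_left _ (Nat.succ_pos n)
      simp only [Finset.card_univ, Fintype.card_fin]
      rw [Nat.cast_sub hmm]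
      push_cast
      nlinarith []
    have h2 : (∑ p ∈ F, Real.sqrt (μ p.1 * μ p.2))^2 ≤ ((m : ℝ) * ((m : ℝ) - 1)) * S := by
      calc (∑ p ∈ F, Real.sqrt (μ p.1 * μ p.2))^2 ≤ (F.card : ℝ) * S := hcs
      _ ≤ _ := by apply mul_le_mul_of_nonneg_right hcard hS0
    have h3 : 0 ≤ ∑ p ∈ F, Real.sqrt (μ p.1 * μ p.2) :=
      Finset.sum_nonneg fun p _ => Real.sqrt_nonneg _
    calc (∑ p ∈ F, Real.sqrt (μ p.1 * μ p.2))
        = Real.sqrt ((∑ p ∈ F, Real.sqrt (μ p.1 * μ p.2))^2) := (Real.sqrt_sq h3).symm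
    _ ≤ _ := Real.sqrt_le_sqrt h2
  have hfin : Real.sqrt (((m : ℝ) * ((m : ℝ) - 1)) * S)
      = Real.sqrt (((m : ℝ) * ((m : ℝ) - 1)) / 2) * Real.sqrt (2 * S) := by
    rw [← Real.sqrt_mul (by positivity)]
    congr 1
    ring
  calc -(hip ψ (W.mulVec ψ)).re ≤ _ := h1
  _ ≤ Real.sqrt (((m : ℝ) * ((m : ℝ) - 1)) * S) := hT
  _ = _ := by rw [hfin, hconc]

lemma decomp_exists {ι : Type} [Fintype ι] [DecidableEq ι] (ρ : Matrix ι ι ℂ)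
    (hρ : ρ.PosSemidef) (htr : ρ.trace = 1) :
    ∃ (N : ℕ) (p : Fin N → ℝ) (ψ : Fin N → (ι → ℂ)),
      (∀ i, 0 < p i) ∧ ∑ i, p i = 1 ∧ (∀ i, hip (ψ i) (ψ i) = 1) ∧
      ρ = ∑ i, (p i : ℂ) • Matrix.of (fun x y => ψ i x * conj (ψ i y)) := by
  classical
  have hH := hρ.1
  set lam : ι → ℝ := hH.eigenvalues with hlam
  set U : Matrix ι ι ℂ := (hH.eigenvectorUnitary : Matrix ι ι ℂ) with hU
  have hUU : Uᴴ * U = 1 := by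
    rw [← Matrix.star_eq_conjTranspose]
    exact (Matrix.mem_unitaryGroup_iff').mp hH.eigenvectorUnitary.2
  have hl0 : ∀ i, 0 ≤ lam i := fun i => hρ.eigenvalues_nonneg i
  have hdiag : Uᴴ * ρ * U = Matrix.diagonal (RCLike.ofReal ∘ lam) := by
    rw [← Matrix.star_eq_conjTranspose]
    have h := hH.conjStarAlgAut_star_eigenvectorUnitary
    rw [Unitary.conjStarAlgAut_star_apply] at h
    exact h
  have hUU' : U * Uᴴ = 1 := by
    rw [← Matrix.star_eq_conjTranspose]
    exact (Matrix.mem_unitaryGroup_iff).mp hH.eigenvectorUnitary.2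
  have hspec : ρ = U * Matrix.diagonal (RCLike.ofReal ∘ lam) * Uᴴ := by
    rw [← Matrix.star_eq_conjTranspose]
    exact hH.spectral_theorem
  have hsum : ∑ i, lam i = 1 := by
    have h2 : Matrix.trace (Uᴴ * ρ * U) = Matrix.trace ρ := by
      rw [Matrix.trace_mul_cycle, hUU', Matrix.one_mul]
    have h3 : (∑ i, (lam i : ℂ)) = 1 := by
      rw [show (∑ i, (lam i : ℂ)) = Matrix.trace (Matrix.diagonal (RCLike.ofReal ∘ lam)) by
        rw [Matrix.trace_diagonal]; rfl, ← hdiag, h2, htr]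
    exact_mod_cast h3
  set T := {i // lam i ≠ 0} with hT
  set e : Fin (Fintype.card T) ≃ T := (Fintype.equivFin T).symm with he
  have hsub : ∀ (g : ι → ℂ), (∑ k, g ((e k : T) : ι)) = ∑ j ∈ Finset.univ.filter (fun j => lam j ≠ 0), g j := by
    intro g
    rw [Equiv.sum_comp e (fun t : T => g (t : ι))]
    exact (Finset.sum_subtype _ (fun x => by simp) g).symm
  refine ⟨Fintype.card T, fun k => lam (e k), fun k x => U x (e k), ?_, ?_, ?_, ?_⟩
  · intro k
    exact lt_of_le_of_ne (hl0 _) (Ne.symm (e k).2)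
  · have hsubR : (∑ k, lam ((e k : T) : ι)) = ∑ j ∈ Finset.univ.filter (fun j => lam j ≠ 0), lam j := by
      rw [Equiv.sum_comp e (fun t : T => lam (t : ι))]
      exact (Finset.sum_subtype _ (fun x => by simp) lam).symm
    rw [hsubR, Finset.sum_filter_ne_zero, hsum]
  · intro k
    have : hip (fun x => U x (e k)) (fun x => U x (e k)) = (Uᴴ * U) (e k) (e k) := by
      simp [hip, Matrix.mul_apply, Matrix.conjTranspose_apply]
    rw [this, hUU, Matrix.one_apply_eq]
  · ext x y
    have hL : ρ x y = ∑ j, (lam j : ℂ) * (U x j * conj (U y j)) := by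
      rw [hspec, Matrix.mul_apply]
      refine Finset.sum_congr rfl fun j _ => ?_
      rw [Matrix.mul_diagonal, Matrix.conjTranspose_apply]
      simp only [Function.comp_apply]
      rw [show ((RCLike.ofReal (lam j) : ℂ)) = ((lam j : ℝ) : ℂ) from rfl]
      rw [show star (U y j) = conj (U y j) from rfl]
      ring
    rw [hL]
    rw [Matrix.sum_apply]
    have hR : ∀ k, ((lam (e k) : ℂ) • Matrix.of (fun x y => U x (e k) * conj (U y (e k)))) x y
        = (lam (e k) : ℂ) * (U x (e k) * conj (U y (e k))) := by
      intro k
      simp [Matrix.smul_apply, smul_eq_mul]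
    rw [Finset.sum_congr rfl fun k _ => hR k]
    rw [hsub (fun j => (lam j : ℂ) * (U x j * conj (U y j)))]
    rw [Finset.sum_filter]
    refine (Finset.sum_congr rfl fun j _ => ?_).symm
    by_cases h : lam j = 0
    · simp [h]
    · simp [h]

/-- Breuer's theorem: if the block positive Hermitian witness `W` satisfies
`−⟨ψ, Wψ⟩ ≤ ∑_{i≠j} √(μᵢμⱼ)` for every unit vector with Schmidt coefficients
`μ`, and `ρ` is a density matrix with `Tr(ρW) < 0`, then every pure-state
decomposition of `ρ` satisfies
`∑ᵢ pᵢ C(ψᵢ) ≥ √(2/(m(m−1))) |Tr(ρW)|`, and hence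
`C(ρ) ≥ √(2/(m(m−1))) |Tr(ρW)|`. -/
theorem stmt7 {m : ℕ} (W : Matrix (Fin m × Fin m) (Fin m × Fin m) ℂ)
    (hW : W.IsHermitian) (hBP : BlockPos W)
    (hcond : ∀ (ψ : Fin m × Fin m → ℂ) (a b : Fin m → Fin m → ℂ) (μ : Fin m → ℝ),
      hip ψ ψ = 1 → IsSchmidt ψ a b μ →
      -(hip ψ (W.mulVec ψ)).re
        ≤ ∑ i, ∑ j, (if i ≠ j then Real.sqrt (μ i * μ j) else 0))
    (ρ : Matrix (Fin m × Fin m) (Fin m × Fin m) ℂ)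
    (hρ : ρ.PosSemidef) (hρtr : ρ.trace = 1)
    (hdet : (Matrix.trace (ρ * W)).re < 0) :
    (∀ (N : ℕ) (p : Fin N → ℝ) (ψ : Fin N → (Fin m × Fin m → ℂ)),
      (∀ i, 0 < p i) → ∑ i, p i = 1 → (∀ i, hip (ψ i) (ψ i) = 1) →
      ρ = ∑ i, (p i : ℂ) • Matrix.of (fun x y => ψ i x * conj (ψ i y)) →
      Real.sqrt (2 / ((m : ℝ) * ((m : ℝ) - 1))) * |(Matrix.trace (ρ * W)).re|
        ≤ ∑ i, p i * concP (ψ i)) ∧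
    Real.sqrt (2 / ((m : ℝ) * ((m : ℝ) - 1))) * |(Matrix.trace (ρ * W)).re|
      ≤ concM ρ := by
  have traceEq : ∀ (N : ℕ) (p : Fin N → ℝ) (ψ : Fin N → (Fin m × Fin m → ℂ)),
      ρ = ∑ i, (p i : ℂ) • Matrix.of (fun x y => ψ i x * conj (ψ i y)) →
      (Matrix.trace (ρ * W)).re = ∑ i, p i * (hip (ψ i) (W.mulVec (ψ i))).re := by
    intro N p ψ hdecomp
    have h1 : ∀ i, Matrix.trace ((Matrix.of (fun x y => ψ i x * conj (ψ i y))) * W)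
        = hip (ψ i) (W.mulVec (ψ i)) := by
      intro i
      rw [Matrix.trace]
      simp only [Matrix.diag, Matrix.mul_apply, Matrix.of_apply, hip, Matrix.mulVec,
        dotProduct]
      rw [Finset.sum_comm]
      refine Finset.sum_congr rfl fun y _ => ?_
      rw [Finset.mul_sum]
      refine Finset.sum_congr rfl fun x _ => ?_
      ring
    have h2 : Matrix.trace (ρ * W) = ∑ i, (p i : ℂ) * hip (ψ i) (W.mulVec (ψ i)) := by
      rw [hdecomp, Finset.sum_mul]
      rw [Matrix.trace_sum]
      refine Finset.sum_congr rfl fun i _ => ?_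
      rw [Matrix.smul_mul, Matrix.trace_smul, h1 i, smul_eq_mul]
    rw [h2, Complex.re_sum]
    refine Finset.sum_congr rfl fun i _ => ?_
    simp [Complex.mul_re]
  have hconc0 : ∀ (ψ : Fin m × Fin m → ℂ), 0 ≤ concP ψ := fun ψ => Real.sqrt_nonneg _
  have hK0 : 0 ≤ (m : ℝ) * ((m : ℝ) - 1) := by
    rcases Nat.eq_zero_or_pos m with h | h
    · simp [h]
    · have : (1 : ℝ) ≤ (m : ℝ) := by exact_mod_cast h
      nlinarith
  have part1 : ∀ (N : ℕ) (p : Fin N → ℝ) (ψ : Fin N → (Fin m × Fin m → ℂ)),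
      (∀ i, 0 < p i) → ∑ i, p i = 1 → (∀ i, hip (ψ i) (ψ i) = 1) →
      ρ = ∑ i, (p i : ℂ) • Matrix.of (fun x y => ψ i x * conj (ψ i y)) →
      Real.sqrt (2 / ((m : ℝ) * ((m : ℝ) - 1))) * |(Matrix.trace (ρ * W)).re|
        ≤ ∑ i, p i * concP (ψ i) := by
    intro N p ψ hp hsum1 hunit hdecomp
    have htr := traceEq N p ψ hdecomp
    have habs : |(Matrix.trace (ρ * W)).re| = -(Matrix.trace (ρ * W)).re := abs_of_neg hdet
    have hsumle : -(Matrix.trace (ρ * W)).re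
        ≤ Real.sqrt (((m : ℝ) * ((m : ℝ) - 1)) / 2) * ∑ i, p i * concP (ψ i) := by
      rw [htr]
      have hneg : -(∑ i, p i * (hip (ψ i) (W.mulVec (ψ i))).re)
          = ∑ i, p i * (-(hip (ψ i) (W.mulVec (ψ i))).re) := by
        rw [← Finset.sum_neg_distrib]
        exact Finset.sum_congr rfl fun i _ => by ring
      rw [hneg, Finset.mul_sum]
      refine Finset.sum_le_sum fun i _ => ?_
      have hps := perstate W hcond (ψ i) (hunit i)
      calc p i * (-(hip (ψ i) (W.mulVec (ψ i))).re)
          ≤ p i * (Real.sqrt (((m : ℝ) * ((m : ℝ) - 1)) / 2) * concP (ψ i)) :=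
            mul_le_mul_of_nonneg_left hps (hp i).le
      _ = Real.sqrt (((m : ℝ) * ((m : ℝ) - 1)) / 2) * (p i * concP (ψ i)) := by ring
    rcases eq_or_lt_of_le hK0 with hK | hK
    · rw [← hK, div_zero, Real.sqrt_zero, zero_mul]
      exact Finset.sum_nonneg fun i _ => mul_nonneg (hp i).le (hconc0 (ψ i))
    · have h2K : Real.sqrt (2 / ((m : ℝ) * ((m : ℝ) - 1)))
          * Real.sqrt (((m : ℝ) * ((m : ℝ) - 1)) / 2) = 1 := by
        rw [← Real.sqrt_mul (by positivity)]
        rw [show 2 / ((m : ℝ) * ((m : ℝ) - 1)) * (((m : ℝ) * ((m : ℝ) - 1)) / 2) = 1 by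
          rw [div_mul_div_comm, mul_comm 2, div_self (mul_ne_zero hK.ne' two_ne_zero)]]
        exact Real.sqrt_one
      calc Real.sqrt (2 / ((m : ℝ) * ((m : ℝ) - 1))) * |(Matrix.trace (ρ * W)).re|
          = Real.sqrt (2 / ((m : ℝ) * ((m : ℝ) - 1))) * (-(Matrix.trace (ρ * W)).re) := by
            rw [habs]
      _ ≤ Real.sqrt (2 / ((m : ℝ) * ((m : ℝ) - 1)))
            * (Real.sqrt (((m : ℝ) * ((m : ℝ) - 1)) / 2) * ∑ i, p i * concP (ψ i)) :=
            mul_le_mul_of_nonneg_left hsumle (Real.sqrt_nonneg _)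
      _ = (Real.sqrt (2 / ((m : ℝ) * ((m : ℝ) - 1)))
            * Real.sqrt (((m : ℝ) * ((m : ℝ) - 1)) / 2)) * ∑ i, p i * concP (ψ i) := by ring
      _ = ∑ i, p i * concP (ψ i) := by rw [h2K, one_mul]
  refine ⟨part1, ?_⟩
  rw [concM]
  apply le_csInf
  · obtain ⟨N, p, ψ, h1, h2, h3, h4⟩ := decomp_exists ρ hρ hρtr
    exact ⟨∑ i, p i * concP (ψ i), N, p, ψ, h1, h2, h3, h4, rfl⟩
  · rintro cc ⟨N, p, ψ, h1, h2, h3, h4, rfl⟩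
    exact part1 N p ψ h1 h2 h3 h4

end
end

section
/- (Chen–Albeverio–Fei bound, realignment part.) Let ρ be a density matrix on ℂ^m⊗ℂ^m and let R(ρ) denote the realigned matrix, (R(ρ))_{(i,j),(k,l)} = ρ_{(i,k),(j,l)}. Then for every pure-state decomposition ρ = Σ_i p_i |ψ_i⟩⟨ψ_i| (p_i > 0, Σ_i p_i = 1, ψ_i unit vectors), one has Σ_i p_i C(ψ_i) ≥ √(2/(m(m−1))) · (‖R(ρ)‖₁ − 1); consequently C(ρ) ≥ √(2/(m(m−1))) · (‖R(ρ)‖₁ − 1). -/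
open scoped BigOperators ComplexConjugate ComplexOrder
open Finset Matrix
open scoped Kronecker

set_option linter.unusedSectionVars false
set_option linter.unusedVariables false
set_option maxHeartbeats 1000000

noncomputable section

/-- The trace norm `‖X‖₁ = Tr√(X†X)`, the sum of the singular values of `X`. -/
def traceNorm {ι : Type} [Fintype ι] [DecidableEq ι] (X : Matrix ι ι ℂ) : ℝ :=
  (Matrix.trace ((Matrix.posSemidef_conjTranspose_mul_self X).1.eigenvectorUnitary.1 *
    Matrix.diagonal ((fun r : ℝ => (r : ℂ)) ∘ (Real.sqrt ·) ∘ (Matrix.posSemidef_conjTranspose_mul_self X).1.eigenvalues) *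
    (star (Matrix.posSemidef_conjTranspose_mul_self X).1.eigenvectorUnitary : Matrix ι ι ℂ))).re

/-- The realignment `(R(ρ))_{(i,j),(k,l)} = ρ_{(i,k),(j,l)}`. -/
def realign {m : ℕ} (ρ : Matrix (Fin m × Fin m) (Fin m × Fin m) ℂ) :
    Matrix (Fin m × Fin m) (Fin m × Fin m) ℂ :=
  Matrix.of fun p q => ρ (p.1, q.1) (p.2, q.2)

namespace Matrix.PosSemidef
variable {ι : Type} [Fintype ι] [DecidableEq ι]

/-- The positive semidefinite square root (as in the older Mathlib). -/
def sqrt {A : Matrix ι ι ℂ} (hA : A.PosSemidef) : Matrix ι ι ℂ :=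
  hA.1.eigenvectorUnitary.1 * diagonal ((fun r : ℝ => (r : ℂ)) ∘ (Real.sqrt ·) ∘ hA.1.eigenvalues) *
    (star hA.1.eigenvectorUnitary : Matrix ι ι ℂ)

lemma posSemidef_sqrt {A : Matrix ι ι ℂ} (hA : A.PosSemidef) : hA.sqrt.PosSemidef := by
  have h := (PosSemidef.diagonal (R := ℂ)
    (d := (fun r : ℝ => (r : ℂ)) ∘ (Real.sqrt ·) ∘ hA.1.eigenvalues)
    (fun i => Complex.zero_le_real.mpr (Real.sqrt_nonneg _))).mul_mul_conjTranspose_same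
    (hA.1.eigenvectorUnitary : Matrix ι ι ℂ)
  unfold sqrt
  rw [star_eq_conjTranspose]
  exact h

lemma sq_sqrt {A : Matrix ι ι ℂ} (hA : A.PosSemidef) : hA.sqrt ^ 2 = A := by
  set U : Matrix ι ι ℂ := (hA.1.eigenvectorUnitary : Matrix ι ι ℂ) with hUd
  set D := diagonal ((fun r : ℝ => (r : ℂ)) ∘ (Real.sqrt ·) ∘ hA.1.eigenvalues) with hDd
  have hU : star U * U = 1 := Unitary.star_mul_self_of_mem hA.1.eigenvectorUnitary.2
  have hD : D * D = diagonal (RCLike.ofReal ∘ hA.1.eigenvalues) := by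
    rw [hDd, diagonal_mul_diagonal]; congr 1; funext i
    simp only [Function.comp_apply]
    rw [← Complex.ofReal_mul, Real.mul_self_sqrt (hA.eigenvalues_nonneg i)]; rfl
  have hs : hA.sqrt = U * D * star U := rfl
  conv_rhs => rw [hA.1.spectral_theorem, Unitary.conjStarAlgAut_apply, ← hD]
  rw [hs, pow_two]
  calc U * D * star U * (U * D * star U) = U * D * (star U * U) * D * star U := by
        simp only [Matrix.mul_assoc]
    _ = _ := by rw [hU, Matrix.mul_one]; simp only [Matrix.mul_assoc]; rfl

lemma sqrt_mul_self {A : Matrix ι ι ℂ} (hA : A.PosSemidef) : hA.sqrt * hA.sqrt = A := by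
  rw [← pow_two, sq_sqrt]

lemma eq_of_sq_eq_sq' {A B : Matrix ι ι ℂ} (hA : A.PosSemidef) (hB : B.PosSemidef)
    (hAB : A ^ 2 = B ^ 2) : A = B := by
  by_contra h_ne
  obtain ⟨v, t, ht, hv, hv'⟩ :=
    (hA.1.sub hB.1).exists_eigenvector_of_ne_zero (sub_ne_zero.mpr h_ne)
  have h_sum : 0 = (t : ℂ) * (star v ⬝ᵥ (A *ᵥ v) + star v ⬝ᵥ (B *ᵥ v)) := calc
    0 = star v ⬝ᵥ ((A ^ 2 - B ^ 2) *ᵥ v) := by rw [hAB, sub_self, zero_mulVec, dotProduct_zero]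
    _ = star v ⬝ᵥ (A *ᵥ ((A - B) *ᵥ v)) + star v ⬝ᵥ ((A - B) *ᵥ (B *ᵥ v)) := by
      rw [mulVec_mulVec, mulVec_mulVec, ← dotProduct_add, ← add_mulVec, Matrix.mul_sub,
        Matrix.sub_mul, add_sub, sub_add_cancel, pow_two, pow_two]
    _ = (t : ℂ) * (star v ⬝ᵥ (A *ᵥ v)) + (star v) ᵥ* (A - B)ᴴ ⬝ᵥ (B *ᵥ v) := by
      rw [hv', mulVec_smul, dotProduct_smul, Complex.real_smul,
        dotProduct_mulVec _ (A - B), hA.1.sub hB.1]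
    _ = (t : ℂ) * (star v ⬝ᵥ (A *ᵥ v) + star v ⬝ᵥ (B *ᵥ v)) := by
      have hs : star v ᵥ* (A - B)ᴴ = t • star v := by
        rw [← star_mulVec, hv', star_smul, star_trivial]
      rw [hs, smul_dotProduct, Complex.real_smul, mul_add]
  replace h_sum : star v ⬝ᵥ (A *ᵥ v) + star v ⬝ᵥ (B *ᵥ v) = 0 := by
    rw [eq_comm, ← mul_zero (t : ℂ)] at h_sum
    exact mul_left_cancel₀ (Complex.ofReal_ne_zero.mpr ht) h_sum
  have h_van : star v ⬝ᵥ (A *ᵥ v) = 0 ∧ star v ⬝ᵥ (B *ᵥ v) = 0 := by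
    refine ⟨le_antisymm ?_ (hA.dotProduct_mulVec_nonneg v),
      le_antisymm ?_ (hB.dotProduct_mulVec_nonneg v)⟩
    · rw [add_comm, add_eq_zero_iff_eq_neg] at h_sum
      simpa only [h_sum, neg_nonneg] using hB.dotProduct_mulVec_nonneg v
    · simpa only [add_eq_zero_iff_eq_neg.mp h_sum, neg_nonneg] using hA.dotProduct_mulVec_nonneg v
  have aux : star v ⬝ᵥ ((A - B) *ᵥ v) = 0 := by
    rw [sub_mulVec, dotProduct_sub, h_van.1, h_van.2, sub_zero]
  rw [hv', dotProduct_smul, Complex.real_smul, _root_.mul_eq_zero,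
    Complex.ofReal_eq_zero] at aux
  exact hv <| dotProduct_star_self_eq_zero.mp <| aux.resolve_left ht

lemma eq_sqrt_of_sq_eq {A B : Matrix ι ι ℂ} (hA : A.PosSemidef) (hB : B.PosSemidef)
    (hAB : A ^ 2 = B) : A = hB.sqrt :=
  eq_of_sq_eq_sq' hA hB.posSemidef_sqrt (by rw [hAB, sq_sqrt])

end Matrix.PosSemidef

lemma traceNorm_eq {ι : Type} [Fintype ι] [DecidableEq ι] (X : Matrix ι ι ℂ) :
    traceNorm X = (Matrix.trace ((Matrix.posSemidef_conjTranspose_mul_self X).sqrt)).re := rfl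

section Helpers
variable {ι κ : Type} [Fintype ι] [DecidableEq ι] [Fintype κ] [DecidableEq κ]

def n2 (f : ι → ℂ) : ℝ := ∑ i, Complex.normSq (f i)

lemma n2_nonneg (f : ι → ℂ) : 0 ≤ n2 f :=
  Finset.sum_nonneg fun i _ => Complex.normSq_nonneg _

lemma hip_self_re (f : ι → ℂ) : (hip f f).re = n2 f := by
  simp [hip, n2, ← Complex.normSq_eq_conj_mul_self, Complex.re_sum]

lemma abs_hip_le (f g : ι → ℂ) :
    ‖hip f g‖ ≤ Real.sqrt (n2 f) * Real.sqrt (n2 g) := by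
  have h := norm_inner_le_norm (𝕜 := ℂ) (E := EuclideanSpace ℂ ι)
    ((WithLp.equiv 2 _).symm f) ((WithLp.equiv 2 _).symm g)
  simpa [hip, n2, PiLp.inner_apply, RCLike.inner_apply, EuclideanSpace.norm_eq,
    Complex.sq_norm, mul_comm] using h

lemma hip_mulVec_left (M : Matrix ι ι ℂ) (x y : ι → ℂ) :
    hip (M.mulVec x) y = hip x (Mᴴ.mulVec y) := by
  simp only [hip, mulVec, dotProduct, conjTranspose_apply, map_sum, _root_.map_mul,
    Finset.mul_sum, Finset.sum_mul]
  rw [Finset.sum_comm]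
  congr 1; ext j; congr 1; ext i; ring_nf; simp [mul_comm, mul_left_comm]

lemma hip_mulVec_right (M : Matrix ι ι ℂ) (x y : ι → ℂ) :
    hip x (M.mulVec y) = hip (Mᴴ.mulVec x) y := by
  rw [hip_mulVec_left, conjTranspose_conjTranspose]

lemma hip_mulVec_same (M : Matrix ι ι ℂ) (x y : ι → ℂ) :
    hip (M.mulVec x) (M.mulVec y) = hip x ((Mᴴ * M).mulVec y) := by
  rw [hip_mulVec_left, mulVec_mulVec]

/-- A contraction in the ℓ² sense. -/
def Contr (B : Matrix ι ι ℂ) : Prop := ∀ v : ι → ℂ, n2 (B.mulVec v) ≤ n2 v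

lemma Contr.mul {A B : Matrix ι ι ℂ} (hA : Contr A) (hB : Contr B) : Contr (A * B) := by
  intro v; rw [← mulVec_mulVec]; exact (hA _).trans (hB v)

lemma Contr.conjTranspose {A : Matrix ι ι ℂ} (hA : Contr A) : Contr Aᴴ := by
  intro v
  have h1 : n2 (Aᴴ.mulVec v) = (hip (Aᴴ.mulVec v) (Aᴴ.mulVec v)).re := (hip_self_re _).symm
  have h2 : hip (Aᴴ.mulVec v) (Aᴴ.mulVec v) = hip v (A.mulVec (Aᴴ.mulVec v)) := by
    rw [hip_mulVec_left, conjTranspose_conjTranspose, mulVec_mulVec]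
  have h3 : (hip v (A.mulVec (Aᴴ.mulVec v))).re ≤
      Real.sqrt (n2 v) * Real.sqrt (n2 (A.mulVec (Aᴴ.mulVec v))) :=
    (Complex.re_le_norm _).trans (abs_hip_le _ _)
  have h4 : Real.sqrt (n2 (A.mulVec (Aᴴ.mulVec v))) ≤ Real.sqrt (n2 (Aᴴ.mulVec v)) :=
    Real.sqrt_le_sqrt (hA _)
  have h5 : n2 (Aᴴ.mulVec v) ≤ Real.sqrt (n2 v) * Real.sqrt (n2 (Aᴴ.mulVec v)) := by
    calc n2 (Aᴴ.mulVec v) = (hip v (A.mulVec (Aᴴ.mulVec v))).re := by rw [← h2, ← h1]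
    _ ≤ _ := h3.trans (mul_le_mul_of_nonneg_left h4 (Real.sqrt_nonneg _))
  nlinarith [Real.sq_sqrt (n2_nonneg (Aᴴ.mulVec v)), Real.sq_sqrt (n2_nonneg v),
    Real.sqrt_nonneg (n2 (Aᴴ.mulVec v)), Real.sqrt_nonneg (n2 v),
    sq_nonneg (Real.sqrt (n2 v) - Real.sqrt (n2 (Aᴴ.mulVec v)))]

lemma contr_of_herm_sq (W U : Matrix ι ι ℂ) (e : ι → ℂ) (hU2 : U * Uᴴ = 1)
    (hWW : Wᴴ * W = U * diagonal e * Uᴴ) (he : ∀ i, (e i).re ≤ 1) : Contr W := by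
  intro v
  have hsplit : (U * diagonal e * Uᴴ).mulVec v
      = U.mulVec ((diagonal e).mulVec (Uᴴ.mulVec v)) := by
    rw [mulVec_mulVec, mulVec_mulVec, Matrix.mul_assoc]
  have h1 : hip (W.mulVec v) (W.mulVec v)
      = hip (Uᴴ.mulVec v) ((diagonal e).mulVec (Uᴴ.mulVec v)) := by
    rw [hip_mulVec_same, hWW, hsplit, hip_mulVec_right]
  have h2 : hip (Uᴴ.mulVec v) (Uᴴ.mulVec v) = hip v v := by
    rw [hip_mulVec_same, conjTranspose_conjTranspose, hU2, one_mulVec]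
  set w := Uᴴ.mulVec v with hw
  have h3 : (hip w ((diagonal e).mulVec w)).re ≤ n2 w := by
    have : ∀ i : ι, (conj (w i) * ((diagonal e).mulVec w i)).re ≤ Complex.normSq (w i) := by
      intro i
      have : (diagonal e).mulVec w i = e i * w i := by
        simp [mulVec, diagonal, dotProduct]
      rw [this]
      have hnc : conj (w i) * w i = (Complex.normSq (w i) : ℂ) :=
        (Complex.normSq_eq_conj_mul_self).symm
      have : conj (w i) * (e i * w i) = e i * (Complex.normSq (w i) : ℂ) := by
        rw [← hnc]; ring
      rw [this]
      simp only [Complex.mul_re, Complex.ofReal_re, Complex.ofReal_im, mul_zero, sub_zero]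
      nlinarith [he i, Complex.normSq_nonneg (w i)]
    calc (hip w ((diagonal e).mulVec w)).re
        = ∑ i, (conj (w i) * ((diagonal e).mulVec w i)).re := by
          simp [hip, Complex.re_sum]
      _ ≤ ∑ i, Complex.normSq (w i) := Finset.sum_le_sum fun i _ => this i
      _ = n2 w := rfl
  calc n2 (W.mulVec v) = (hip (W.mulVec v) (W.mulVec v)).re := (hip_self_re _).symm
    _ = (hip w ((diagonal e).mulVec w)).re := by rw [h1]
    _ ≤ n2 w := h3
    _ = (hip w w).re := (hip_self_re _).symm
    _ = (hip v v).re := by rw [h2]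
    _ = n2 v := hip_self_re _

lemma polar (X : Matrix ι ι ℂ) :
    ∃ W : Matrix ι ι ℂ, Contr W ∧ X = W * (posSemidef_conjTranspose_mul_self X).sqrt ∧
      Wᴴ * X = (posSemidef_conjTranspose_mul_self X).sqrt := by
  have hH := posSemidef_conjTranspose_mul_self X
  set hHerm : (Xᴴ * X).IsHermitian := hH.1 with hHermdef
  set U : Matrix ι ι ℂ := ↑hHerm.eigenvectorUnitary with hUdef
  set lam := hHerm.eigenvalues with hlamdef
  have hlam0 : ∀ i, 0 ≤ lam i := fun i => hH.eigenvalues_nonneg i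
  have hmem := hHerm.eigenvectorUnitary.2
  rw [Unitary.mem_iff] at hmem
  have hU1 : Uᴴ * U = 1 := by
    rw [← Matrix.star_eq_conjTranspose]; exact hmem.1
  have hU2 : U * Uᴴ = 1 := by
    rw [← Matrix.star_eq_conjTranspose]; exact hmem.2
  set lamc : ι → ℂ := fun i => (lam i : ℂ) with hlamc
  set d : ι → ℂ := fun i => (Real.sqrt (lam i) : ℂ) with hd
  set dp : ι → ℂ := fun i => if lam i = 0 then 0 else ((Real.sqrt (lam i))⁻¹ : ℝ) with hdp
  set e : ι → ℂ := fun i => if lam i = 0 then 0 else 1 with he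
  have key : ∀ a b : ι → ℂ, (U * diagonal a * Uᴴ) * (U * diagonal b * Uᴴ)
      = U * diagonal (fun i => a i * b i) * Uᴴ := by
    intro a b
    calc (U * diagonal a * Uᴴ) * (U * diagonal b * Uᴴ)
        = U * diagonal a * (Uᴴ * U) * diagonal b * Uᴴ := by
          simp only [Matrix.mul_assoc]
      _ = U * (diagonal a * diagonal b) * Uᴴ := by
          rw [hU1]; simp only [Matrix.mul_one, Matrix.mul_assoc]
      _ = U * diagonal (fun i => a i * b i) * Uᴴ := by
          rw [diagonal_mul_diagonal]
  have hspec : Xᴴ * X = U * diagonal lamc * Uᴴ := by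
    have := hHerm.spectral_theorem
    rw [Unitary.conjStarAlgAut_apply] at this
    rw [← Matrix.star_eq_conjTranspose]
    exact this
  have hsqrt : hH.sqrt = U * diagonal d * Uᴴ := by
    rw [Matrix.PosSemidef.sqrt]
    simp only [Matrix.star_eq_conjTranspose]
    rfl
  have hermconj : ∀ a : ι → ℂ, (∀ i, star (a i) = a i) →
      (U * diagonal a * Uᴴ)ᴴ = U * diagonal a * Uᴴ := by
    intro a ha
    have h1 : star a = a := funext ha
    simp only [conjTranspose_mul, conjTranspose_conjTranspose, diagonal_conjTranspose, h1,
      Matrix.mul_assoc]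
  set Q : Matrix ι ι ℂ := U * diagonal dp * Uᴴ with hQ
  have hQherm : Qᴴ = Q := hermconj dp (by
    intro i; by_cases h : lam i = 0 <;> simp [hdp, h])
  set W : Matrix ι ι ℂ := X * Q with hW
  have hsne : ∀ i, lam i ≠ 0 → Real.sqrt (lam i) ≠ 0 := fun i h =>
    ne_of_gt (Real.sqrt_pos.mpr (lt_of_le_of_ne (hlam0 i) (Ne.symm h)))
  have hfd : (fun i => dp i * lamc i) = d := by
    funext i
    by_cases h : lam i = 0
    · simp [hdp, hd, hlamc, h]
    · rw [hdp, hd, hlamc]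
      simp only [if_neg h]
      rw [← Complex.ofReal_mul]
      congr 1
      field_simp
      exact Real.div_sqrt
  have hfe1 : (fun i => dp i * d i) = e := by
    funext i
    by_cases h : lam i = 0
    · simp [hdp, hd, he, h]
    · rw [hdp, hd, he]
      simp only [if_neg h]
      rw [← Complex.ofReal_mul, inv_mul_cancel₀ (hsne i h)]
      norm_num
  have hfe2 : (fun i => d i * dp i) = e := by
    funext i
    by_cases h : lam i = 0
    · simp [hdp, hd, he, h]
    · rw [hdp, hd, he]
      simp only [if_neg h]
      rw [← Complex.ofReal_mul, mul_inv_cancel₀ (hsne i h)]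
      norm_num
  have hQH : Q * (Xᴴ * X) = hH.sqrt := by
    calc Q * (Xᴴ * X) = (U * diagonal dp * Uᴴ) * (U * diagonal lamc * Uᴴ) := by
          rw [hspec]
      _ = U * diagonal (fun i => dp i * lamc i) * Uᴴ := key _ _
      _ = U * diagonal d * Uᴴ := by rw [hfd]
      _ = hH.sqrt := hsqrt.symm
  have hWX : Wᴴ * X = hH.sqrt := by
    rw [hW, conjTranspose_mul, hQherm, Matrix.mul_assoc]; exact hQH
  have hQsqrt : Q * hH.sqrt = U * diagonal e * Uᴴ := by
    rw [hsqrt, hQ, key, hfe1]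
  have hone : (1 : Matrix ι ι ℂ) = U * diagonal (fun _ => (1:ℂ)) * Uᴴ := by
    rw [diagonal_one, Matrix.mul_one, hU2]
  have hdiff : U * diagonal e * Uᴴ - 1 = U * diagonal (fun i => e i - 1) * Uᴴ := by
    conv_lhs => rw [hone]
    rw [← Matrix.sub_mul, ← Matrix.mul_sub, diagonal_sub]
  have hXproj : X * (U * diagonal e * Uᴴ) = X := by
    have hSherm : (U * diagonal (fun i => e i - 1) * Uᴴ)ᴴ
        = U * diagonal (fun i => e i - 1) * Uᴴ := hermconj _ (by
      intro i; by_cases h : lam i = 0 <;> simp [he, h])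
    have hptw : (fun i => (e i - 1) * (lamc i * (e i - 1))) = (fun _ => (0:ℂ)) := by
      funext i
      by_cases h : lam i = 0 <;> simp [he, hlamc, h]
    have hzero : (X * (U * diagonal (fun i => e i - 1) * Uᴴ))ᴴ
        * (X * (U * diagonal (fun i => e i - 1) * Uᴴ)) = 0 := by
      calc (X * (U * diagonal (fun i => e i - 1) * Uᴴ))ᴴ
            * (X * (U * diagonal (fun i => e i - 1) * Uᴴ))
          = (U * diagonal (fun i => e i - 1) * Uᴴ)
            * ((Xᴴ * X) * (U * diagonal (fun i => e i - 1) * Uᴴ)) := by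
            rw [conjTranspose_mul, hSherm, Matrix.mul_assoc, ← Matrix.mul_assoc Xᴴ]
        _ = (U * diagonal (fun i => e i - 1) * Uᴴ)
            * ((U * diagonal lamc * Uᴴ) * (U * diagonal (fun i => e i - 1) * Uᴴ)) := by
            rw [hspec]
        _ = (U * diagonal (fun i => e i - 1) * Uᴴ)
            * (U * diagonal (fun i => lamc i * (e i - 1)) * Uᴴ) := by rw [key]
        _ = U * diagonal (fun i => (e i - 1) * (lamc i * (e i - 1))) * Uᴴ := key _ _
        _ = 0 := by rw [hptw]; simp
    have hXS : X * (U * diagonal (fun i => e i - 1) * Uᴴ) = 0 :=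
      conjTranspose_mul_self_eq_zero.mp hzero
    have h2 : X * (U * diagonal e * Uᴴ) - X = 0 := by
      calc X * (U * diagonal e * Uᴴ) - X
          = X * (U * diagonal e * Uᴴ - 1) := by rw [Matrix.mul_sub, Matrix.mul_one]
        _ = X * (U * diagonal (fun i => e i - 1) * Uᴴ) := by rw [hdiff]
        _ = 0 := hXS
    exact sub_eq_zero.mp h2
  have hXW : X = W * hH.sqrt := by
    rw [hW, Matrix.mul_assoc, hQsqrt, hXproj]
  have hWW : Wᴴ * W = U * diagonal e * Uᴴ := by
    calc Wᴴ * W = (Wᴴ * X) * Q := by rw [hW, ← Matrix.mul_assoc]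
      _ = hH.sqrt * Q := by rw [hWX]
      _ = U * diagonal (fun i => d i * dp i) * Uᴴ := by rw [hsqrt, hQ, key]
      _ = U * diagonal e * Uᴴ := by rw [hfe2]
  have hcontr : Contr W := contr_of_herm_sq W U e hU2 hWW (by
    intro i; by_cases h : lam i = 0 <;> simp [he, h])
  exact ⟨W, hcontr, hXW, hWX⟩

lemma trace_contr_psd {B P : Matrix ι ι ℂ} (hB : Contr B) (hP : P.PosSemidef) :
    (Matrix.trace (B * P)).re ≤ (Matrix.trace P).re := by
  have hSS : hP.sqrt * hP.sqrt = P := hP.sqrt_mul_self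
  have hSherm : hP.sqrt.IsHermitian := hP.posSemidef_sqrt.1
  set S := hP.sqrt with hSdef
  have happ : ∀ j k, S j k = conj (S k j) := by
    intro j k
    have := congrFun (congrFun hSherm j) k
    rw [conjTranspose_apply] at this
    exact this.symm
  have hdiag : ∀ j, (S * (B * S)) j j
      = hip (fun k => S k j) (B.mulVec (fun k => S k j)) := by
    intro j
    simp only [Matrix.mul_apply, hip, mulVec, dotProduct]
    congr 1; funext k
    rw [happ j k]
  have hcs : ∀ j, ((S * (B * S)) j j).re ≤ n2 (fun k => S k j) := by
    intro j
    rw [hdiag j]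
    have h1 : (hip (fun k => S k j) (B.mulVec (fun k => S k j))).re
        ≤ Real.sqrt (n2 fun k => S k j) * Real.sqrt (n2 (B.mulVec fun k => S k j)) :=
      (Complex.re_le_norm _).trans (abs_hip_le _ _)
    have h2 : Real.sqrt (n2 (B.mulVec fun k => S k j)) ≤ Real.sqrt (n2 fun k => S k j) :=
      Real.sqrt_le_sqrt (hB _)
    calc (hip (fun k => S k j) (B.mulVec (fun k => S k j))).re
        ≤ Real.sqrt (n2 fun k => S k j) * Real.sqrt (n2 fun k => S k j) :=
          h1.trans (mul_le_mul_of_nonneg_left h2 (Real.sqrt_nonneg _))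
      _ = n2 (fun k => S k j) := Real.mul_self_sqrt (n2_nonneg _)
  have htr : Matrix.trace (B * P) = Matrix.trace (S * (B * S)) := by
    rw [← hSS, ← Matrix.mul_assoc, trace_mul_comm]
  have htrP : (Matrix.trace P).re = ∑ j, n2 (fun k => S k j) := by
    rw [← hSS]
    simp only [Matrix.trace, Matrix.diag, Matrix.mul_apply, Complex.re_sum, n2]
    rw [Finset.sum_comm]
    congr 1; funext k; congr 1; funext j
    rw [happ k j, Complex.mul_conj]
    simp
  calc (Matrix.trace (B * P)).re = ∑ j, ((S * (B * S)) j j).re := by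
        rw [htr]; simp [Matrix.trace, Matrix.diag, Complex.re_sum]
    _ ≤ ∑ j, n2 (fun k => S k j) := Finset.sum_le_sum fun j _ => hcs j
    _ = (Matrix.trace P).re := htrP.symm

lemma re_trace_le_traceNorm {A : Matrix ι ι ℂ} (X : Matrix ι ι ℂ) (hA : Contr A) :
    (Matrix.trace (A * X)).re ≤ traceNorm X := by
  obtain ⟨W, hW, hXW, -⟩ := polar X
  have : A * X = (A * W) * (posSemidef_conjTranspose_mul_self X).sqrt := by
    rw [Matrix.mul_assoc, ← hXW]
  rw [this]
  simp only [traceNorm_eq]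
  exact trace_contr_psd (hA.mul hW) (posSemidef_conjTranspose_mul_self X).posSemidef_sqrt

lemma trace_unitary_conj (U : Matrix ι ι ℂ) (hU : Uᴴ * U = 1) (g : ι → ℂ) :
    Matrix.trace (U * diagonal g * Uᴴ) = ∑ i, g i := by
  rw [trace_mul_cycle, hU, Matrix.one_mul, trace_diagonal]

lemma traceNorm_eq_sum_sqrt (X : Matrix ι ι ℂ) :
    traceNorm X = ∑ i, Real.sqrt ((posSemidef_conjTranspose_mul_self X).1.eigenvalues i) := by
  have hsd : (posSemidef_conjTranspose_mul_self X).sqrt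
      = (↑(posSemidef_conjTranspose_mul_self X).1.eigenvectorUnitary : Matrix ι ι ℂ)
        * diagonal ((↑) ∘ Real.sqrt ∘ (posSemidef_conjTranspose_mul_self X).1.eigenvalues)
        * (↑(posSemidef_conjTranspose_mul_self X).1.eigenvectorUnitary : Matrix ι ι ℂ)ᴴ := by
    rw [Matrix.PosSemidef.sqrt]
    simp only [Matrix.star_eq_conjTranspose]
  have hmem := (posSemidef_conjTranspose_mul_self X).1.eigenvectorUnitary.2
  rw [Unitary.mem_iff] at hmem
  have hU1 : (↑(posSemidef_conjTranspose_mul_self X).1.eigenvectorUnitary : Matrix ι ι ℂ)ᴴ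
      * (↑(posSemidef_conjTranspose_mul_self X).1.eigenvectorUnitary : Matrix ι ι ℂ) = 1 := by
    rw [← Matrix.star_eq_conjTranspose]; exact hmem.1
  simp only [traceNorm_eq]
  rw [hsd, trace_unitary_conj _ hU1]
  simp [Complex.re_sum, Function.comp]

lemma traceNorm_nonneg (X : Matrix ι ι ℂ) : 0 ≤ traceNorm X := by
  rw [traceNorm_eq_sum_sqrt]
  exact Finset.sum_nonneg fun i _ => Real.sqrt_nonneg _

lemma traceNorm_sum_le {N : ℕ} (X : Fin N → Matrix ι ι ℂ) :
    traceNorm (∑ i, X i) ≤ ∑ i, traceNorm (X i) := by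
  obtain ⟨W, hW, -, hWX⟩ := polar (∑ i, X i)
  have h1 : traceNorm (∑ i, X i) = (Matrix.trace (Wᴴ * ∑ i, X i)).re := by
    simp only [traceNorm_eq]
    rw [hWX]
  rw [h1, Matrix.mul_sum, trace_sum, Complex.re_sum]
  exact Finset.sum_le_sum fun i _ => re_trace_le_traceNorm (X i) hW.conjTranspose

lemma posSemidef_smul_real {P : Matrix ι ι ℂ} (hP : P.PosSemidef) {c : ℝ} (hc : 0 ≤ c) :
    ((c : ℂ) • P).PosSemidef := by
  exact hP.smul (Complex.zero_le_real.mpr hc)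

lemma traceNorm_smul (X : Matrix ι ι ℂ) {c : ℝ} (hc : 0 ≤ c) :
    traceNorm ((c : ℂ) • X) = c * traceNorm X := by
  have hH := posSemidef_conjTranspose_mul_self X
  have hcS : ((c : ℂ) • (posSemidef_conjTranspose_mul_self X).sqrt).PosSemidef :=
    posSemidef_smul_real (posSemidef_conjTranspose_mul_self X).posSemidef_sqrt hc
  have hsq : ((c : ℂ) • (posSemidef_conjTranspose_mul_self X).sqrt) ^ 2
      = ((c : ℂ) • X)ᴴ * ((c : ℂ) • X) := by
    rw [smul_pow, (posSemidef_conjTranspose_mul_self X).sq_sqrt, conjTranspose_smul,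
      Matrix.smul_mul, Matrix.mul_smul, smul_smul]
    congr 1
    rw [Complex.star_def, Complex.conj_ofReal]
    ring
  have hkey : (c : ℂ) • (posSemidef_conjTranspose_mul_self X).sqrt
      = (posSemidef_conjTranspose_mul_self ((c : ℂ) • X)).sqrt :=
    hcS.eq_sqrt_of_sq_eq _ hsq
  simp only [traceNorm_eq]
  rw [← hkey, trace_smul, smul_eq_mul, Complex.re_ofReal_mul]

lemma traceNorm_sum_smul_le {N : ℕ} (p : Fin N → ℝ) (hp : ∀ i, 0 ≤ p i)
    (X : Fin N → Matrix ι ι ℂ) :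
    traceNorm (∑ i, (p i : ℂ) • X i) ≤ ∑ i, p i * traceNorm (X i) := by
  calc traceNorm (∑ i, (p i : ℂ) • X i) ≤ ∑ i, traceNorm ((p i : ℂ) • X i) :=
        traceNorm_sum_le _
    _ = ∑ i, p i * traceNorm (X i) := by
        congr 1; funext i; exact traceNorm_smul _ (hp i)

lemma unitary_conj_mul (U : Matrix ι ι ℂ) (hU : Uᴴ * U = 1) (a b : ι → ℂ) :
    (U * diagonal a * Uᴴ) * (U * diagonal b * Uᴴ)
      = U * diagonal (fun i => a i * b i) * Uᴴ := by
  calc (U * diagonal a * Uᴴ) * (U * diagonal b * Uᴴ)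
      = U * diagonal a * (Uᴴ * U) * diagonal b * Uᴴ := by simp only [Matrix.mul_assoc]
    _ = U * (diagonal a * diagonal b) * Uᴴ := by
        rw [hU]; simp only [Matrix.mul_one, Matrix.mul_assoc]
    _ = U * diagonal (fun i => a i * b i) * Uᴴ := by rw [diagonal_mul_diagonal]

lemma eigV_unitary {A : Matrix ι ι ℂ} (hA : A.IsHermitian) :
    (↑hA.eigenvectorUnitary : Matrix ι ι ℂ)ᴴ * (↑hA.eigenvectorUnitary : Matrix ι ι ℂ) = 1 ∧
    (↑hA.eigenvectorUnitary : Matrix ι ι ℂ) * (↑hA.eigenvectorUnitary : Matrix ι ι ℂ)ᴴ = 1 := by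
  have hmem := hA.eigenvectorUnitary.2
  rw [Unitary.mem_iff] at hmem
  constructor
  · rw [← Matrix.star_eq_conjTranspose]; exact hmem.1
  · rw [← Matrix.star_eq_conjTranspose]; exact hmem.2

lemma spectral' {A : Matrix ι ι ℂ} (hA : A.IsHermitian) :
    A = (↑hA.eigenvectorUnitary : Matrix ι ι ℂ)
      * diagonal (fun i => (hA.eigenvalues i : ℂ))
      * (↑hA.eigenvectorUnitary : Matrix ι ι ℂ)ᴴ := by
  have := hA.spectral_theorem
  rw [Unitary.conjStarAlgAut_apply] at this
  rw [← Matrix.star_eq_conjTranspose]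
  exact this

lemma trace_herm_eq_sum_eigen {A : Matrix ι ι ℂ} (hA : A.IsHermitian) :
    Matrix.trace A = ∑ i, (hA.eigenvalues i : ℂ) := by
  conv_lhs => rw [spectral' hA]
  rw [trace_unitary_conj _ (eigV_unitary hA).1]

lemma trace_sq_herm_eq_sum_eigen {A : Matrix ι ι ℂ} (hA : A.IsHermitian) :
    Matrix.trace (A * A) = ∑ i, ((hA.eigenvalues i : ℂ)) ^ 2 := by
  conv_lhs => rw [spectral' hA]
  rw [unitary_conj_mul _ (eigV_unitary hA).1, trace_unitary_conj _ (eigV_unitary hA).1]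
  congr 1; funext i; ring

lemma trace_im_herm {A : Matrix ι ι ℂ} (hA : A.IsHermitian) :
    (Matrix.trace A).im = 0 := by
  have h : ∀ i, (A i i).im = 0 := by
    intro i
    have h1 := congrFun (congrFun hA i) i
    rw [conjTranspose_apply] at h1
    have := congrArg Complex.im h1
    simp only [Complex.star_def, Complex.conj_im] at this
    linarith
  simp [Matrix.trace, Matrix.diag, Complex.im_sum, h]

lemma kron_conjTranspose (A : Matrix ι ι ℂ) (B : Matrix κ κ ℂ) :
    (A ⊗ₖ B)ᴴ = Aᴴ ⊗ₖ Bᴴ := by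
  ext p q
  simp [conjTranspose_apply, kroneckerMap_apply, mul_comm]

lemma posSemidef_kron {P : Matrix ι ι ℂ} {Q : Matrix κ κ ℂ}
    (hP : P.PosSemidef) (hQ : Q.PosSemidef) : (P ⊗ₖ Q).PosSemidef := by
  have h : P ⊗ₖ Q = (hP.sqrt ⊗ₖ hQ.sqrt)ᴴ * (hP.sqrt ⊗ₖ hQ.sqrt) := by
    rw [kron_conjTranspose, hP.posSemidef_sqrt.1, hQ.posSemidef_sqrt.1,
      ← Matrix.mul_kronecker_mul, hP.sqrt_mul_self, hQ.sqrt_mul_self]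
  rw [h]
  exact posSemidef_conjTranspose_mul_self _

lemma traceNorm_kron (A : Matrix ι ι ℂ) (B : Matrix κ κ ℂ) :
    traceNorm (A ⊗ₖ B) = traceNorm A * traceNorm B := by
  set SA := (posSemidef_conjTranspose_mul_self A).sqrt with hSA
  set SB := (posSemidef_conjTranspose_mul_self B).sqrt with hSB
  have hS : (SA ⊗ₖ SB).PosSemidef :=
    posSemidef_kron (posSemidef_conjTranspose_mul_self A).posSemidef_sqrt
      (posSemidef_conjTranspose_mul_self B).posSemidef_sqrt
  have hsq : (SA ⊗ₖ SB) ^ 2 = (A ⊗ₖ B)ᴴ * (A ⊗ₖ B) := by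
    rw [pow_two, ← Matrix.mul_kronecker_mul, kron_conjTranspose, ← Matrix.mul_kronecker_mul]
    rw [hSA, hSB, (posSemidef_conjTranspose_mul_self A).sqrt_mul_self,
      (posSemidef_conjTranspose_mul_self B).sqrt_mul_self]
  have hkey : SA ⊗ₖ SB = (posSemidef_conjTranspose_mul_self (A ⊗ₖ B)).sqrt :=
    hS.eq_sqrt_of_sq_eq _ hsq
  simp only [traceNorm_eq]
  rw [← hkey, trace_kronecker, Complex.mul_re,
    trace_im_herm (posSemidef_conjTranspose_mul_self A).posSemidef_sqrt.1,
    trace_im_herm (posSemidef_conjTranspose_mul_self B).posSemidef_sqrt.1]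
  ring

lemma traceNorm_conj (M : Matrix ι ι ℂ) :
    traceNorm (M.map (starRingEnd ℂ)) = traceNorm M := by
  have h1 : (M.map (starRingEnd ℂ))ᴴ * (M.map (starRingEnd ℂ)) = (Mᴴ * M)ᵀ := by
    ext i j
    simp only [conjTranspose_apply, transpose_apply, Matrix.mul_apply, Matrix.map_apply,
      Complex.star_def]
    exact Finset.sum_congr rfl fun x _ => by rw [Complex.conj_conj]; exact mul_comm _ _
  set S := (posSemidef_conjTranspose_mul_self M).sqrt with hSdef
  have hST : (Sᵀ).PosSemidef := (posSemidef_conjTranspose_mul_self M).posSemidef_sqrt.transpose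
  have hsq : (Sᵀ) ^ 2 = (M.map (starRingEnd ℂ))ᴴ * (M.map (starRingEnd ℂ)) := by
    rw [h1, pow_two, ← transpose_mul, ← pow_two,
      (posSemidef_conjTranspose_mul_self M).sq_sqrt]
  have hkey : Sᵀ = (posSemidef_conjTranspose_mul_self (M.map (starRingEnd ℂ))).sqrt :=
    hST.eq_sqrt_of_sq_eq _ hsq
  simp only [traceNorm_eq]
  rw [← hkey, trace_transpose]

lemma sum_offDiag_split (F : ι → ι → ℝ) :
    ∑ i, ∑ j, F i j = (∑ i, F i i) + ∑ p ∈ Finset.univ.offDiag, F p.1 p.2 := by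
  rw [← Finset.sum_product']
  rw [show (Finset.univ ×ˢ Finset.univ : Finset (ι × ι))
      = (Finset.univ : Finset ι).diag ∪ (Finset.univ : Finset ι).offDiag from
    (Finset.diag_union_offDiag _).symm]
  rw [Finset.sum_union (Finset.disjoint_diag_offDiag _)]
  congr 1
  have himg : (Finset.univ : Finset ι).diag
      = Finset.image (fun i => (i, i)) Finset.univ := by
    ext p
    simp only [Finset.mem_diag, Finset.mem_image, Finset.mem_univ, true_and]
    constructor
    · rintro h; exact ⟨p.1, by rw [Prod.ext_iff]; exact ⟨rfl, h⟩⟩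
    · rintro ⟨i, rfl⟩; rfl
  rw [himg, Finset.sum_image (by intro a _ b _ h; simpa using congrArg Prod.fst h)]

end Helpers

lemma pure_bound {m : ℕ} (ψ : Fin m × Fin m → ℂ) (hψ : hip ψ ψ = 1) :
    traceNorm (realign (Matrix.of fun x y => ψ x * conj (ψ y)))
      ≤ 1 + Real.sqrt (((m:ℝ) * ((m:ℝ) - 1)) / 2) * concP ψ := by
  set M : Matrix (Fin m) (Fin m) ℂ := Matrix.of (fun i j => ψ (i, j)) with hM
  have hH := posSemidef_conjTranspose_mul_self M
  set lam := hH.1.eigenvalues with hlam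
  have hlam0 : ∀ i, 0 ≤ lam i := fun i => hH.eigenvalues_nonneg i
  -- sum of eigenvalues is 1
  have htr1 : Matrix.trace (Mᴴ * M) = 1 := by
    rw [← hψ, hip]
    simp only [Matrix.trace, Matrix.diag, Matrix.mul_apply, conjTranspose_apply, hM,
      Matrix.of_apply]
    rw [Fintype.sum_prod_type]
    rw [Finset.sum_comm]
    rfl
  have hsum1 : ∑ i, lam i = 1 := by
    have h := trace_herm_eq_sum_eigen hH.1
    rw [htr1] at h
    have := congrArg Complex.re h.symm
    simpa [Complex.re_sum] using this
  -- trace of rhoA squared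
  have hrhoA : rhoA ψ = M * Mᴴ := by
    ext x y
    simp [rhoA, Matrix.mul_apply, conjTranspose_apply, hM]
  have htr2 : (Matrix.trace (rhoA ψ * rhoA ψ)).re = ∑ i, (lam i) ^ 2 := by
    have hcyc : Matrix.trace (rhoA ψ * rhoA ψ) = Matrix.trace ((Mᴴ * M) * (Mᴴ * M)) := by
      rw [hrhoA]
      rw [show M * Mᴴ * (M * Mᴴ) = M * (Mᴴ * (M * Mᴴ)) from by simp only [Matrix.mul_assoc]]
      rw [trace_mul_comm]
      simp only [Matrix.mul_assoc]
    rw [hcyc, trace_sq_herm_eq_sum_eigen hH.1]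
    simp [Complex.re_sum, ← Complex.ofReal_pow]
    rfl
  -- realignment is a Kronecker product
  have hre : realign (Matrix.of fun x y => ψ x * conj (ψ y)) = M ⊗ₖ (M.map (starRingEnd ℂ)) := by
    ext p q
    simp [realign, kroneckerMap_apply, hM, Matrix.map_apply]
  have hTN : traceNorm (realign (Matrix.of fun x y => ψ x * conj (ψ y)))
      = (∑ i, Real.sqrt (lam i)) * (∑ i, Real.sqrt (lam i)) := by
    rw [hre, traceNorm_kron, traceNorm_conj, traceNorm_eq_sum_sqrt]
  -- main estimate
  set T := ∑ p ∈ (Finset.univ : Finset (Fin m)).offDiag, Real.sqrt (lam p.1 * lam p.2) with hT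
  have hsplit : (∑ i, Real.sqrt (lam i)) * (∑ i, Real.sqrt (lam i)) = 1 + T := by
    rw [Finset.sum_mul_sum]
    rw [sum_offDiag_split (fun i j => Real.sqrt (lam i) * Real.sqrt (lam j))]
    congr 1
    · rw [← hsum1]
      exact Finset.sum_congr rfl fun i _ => Real.mul_self_sqrt (hlam0 i)
    · exact Finset.sum_congr rfl fun p _ => (Real.sqrt_mul (hlam0 p.1) _).symm
  have hoffsum : ∑ p ∈ (Finset.univ : Finset (Fin m)).offDiag, lam p.1 * lam p.2
      = 1 - ∑ i, (lam i) ^ 2 := by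
    have h := sum_offDiag_split (fun i j => lam i * lam j)
    have h2 : ∑ i, ∑ j, lam i * lam j = 1 := by
      rw [← Finset.sum_mul_sum, hsum1]; norm_num
    have h3 : ∑ i, lam i * lam i = ∑ i, (lam i) ^ 2 :=
      Finset.sum_congr rfl fun i _ => (sq (lam i)).symm
    rw [h2, h3] at h
    linarith
  have h1ms : 0 ≤ 1 - ∑ i, (lam i) ^ 2 := by
    rw [← hoffsum]
    exact Finset.sum_nonneg fun p _ => mul_nonneg (hlam0 _) (hlam0 _)
  have hcard : ((Finset.univ : Finset (Fin m)).offDiag.card : ℝ) = (m:ℝ) * ((m:ℝ) - 1) := by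
    rw [Finset.offDiag_card]
    simp only [Finset.card_univ, Fintype.card_fin]
    have hmm : m ≤ m * m := by
      rcases Nat.eq_zero_or_pos m with h | h
      · simp [h]
      · calc m = m * 1 := (mul_one m).symm
          _ ≤ m * m := Nat.mul_le_mul_left m h
    rw [Nat.cast_sub hmm]
    push_cast
    ring
  have hann : 0 ≤ (m:ℝ) * ((m:ℝ) - 1) := by
    rcases Nat.eq_zero_or_pos m with h | h
    · simp [h]
    · have h1 : (1:ℝ) ≤ (m:ℝ) := by exact_mod_cast h
      nlinarith
  have hCS : T ^ 2 ≤ ((m:ℝ) * ((m:ℝ) - 1)) * (1 - ∑ i, (lam i) ^ 2) := by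
    have := Finset.sum_sq_le_sum_mul_sum_of_sq_eq_mul
      ((Finset.univ : Finset (Fin m)).offDiag)
      (r := fun p => Real.sqrt (lam p.1 * lam p.2))
      (f := fun _ => (1:ℝ)) (g := fun p => lam p.1 * lam p.2)
      (fun _ _ => zero_le_one)
      (fun p _ => mul_nonneg (hlam0 _) (hlam0 _))
      (fun p _ => by simpa using Real.sq_sqrt (mul_nonneg (hlam0 p.1) (hlam0 p.2)))
    rw [Finset.sum_const, nsmul_eq_mul, mul_one, hoffsum, ← hT] at this
    calc T ^ 2 ≤ ((Finset.univ : Finset (Fin m)).offDiag.card : ℝ)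
          * (1 - ∑ i, (lam i) ^ 2) := this
      _ = ((m:ℝ) * ((m:ℝ) - 1)) * (1 - ∑ i, (lam i) ^ 2) := by rw [hcard]
  have hTnn : 0 ≤ T := Finset.sum_nonneg fun p _ => Real.sqrt_nonneg _
  have hTle : T ≤ Real.sqrt (((m:ℝ) * ((m:ℝ) - 1)) * (1 - ∑ i, (lam i) ^ 2)) := by
    rw [show T = Real.sqrt (T ^ 2) from (Real.sqrt_sq hTnn).symm]
    exact Real.sqrt_le_sqrt hCS
  have hsplit2 : Real.sqrt (((m:ℝ) * ((m:ℝ) - 1)) * (1 - ∑ i, (lam i) ^ 2))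
      = Real.sqrt (((m:ℝ) * ((m:ℝ) - 1)) / 2)
        * Real.sqrt (2 * (1 - ∑ i, (lam i) ^ 2)) := by
    rw [← Real.sqrt_mul (by positivity)]
    congr 1
    ring
  have hconc : concP ψ = Real.sqrt (2 * (1 - ∑ i, (lam i) ^ 2)) := by
    rw [concP, htr2]
  calc traceNorm (realign (Matrix.of fun x y => ψ x * conj (ψ y)))
      = 1 + T := by rw [hTN, hsplit]
    _ ≤ 1 + Real.sqrt (((m:ℝ) * ((m:ℝ) - 1)) / 2) * concP ψ := by
        rw [hconc]
        have := hTle.trans (le_of_eq hsplit2)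
        linarith

/-- Chen–Albeverio–Fei bound, realignment part: for a density matrix `ρ` on
`ℂ^m⊗ℂ^m`, every pure-state decomposition satisfies
`∑ᵢ pᵢ C(ψᵢ) ≥ √(2/(m(m−1))) (‖R(ρ)‖₁ − 1)`, and hence
`C(ρ) ≥ √(2/(m(m−1))) (‖R(ρ)‖₁ − 1)`. -/
theorem stmt10 {m : ℕ} (ρ : Matrix (Fin m × Fin m) (Fin m × Fin m) ℂ)
    (hρ : ρ.PosSemidef) (hρtr : ρ.trace = 1) :
    (∀ (N : ℕ) (p : Fin N → ℝ) (ψ : Fin N → (Fin m × Fin m → ℂ)),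
      (∀ i, 0 < p i) → ∑ i, p i = 1 → (∀ i, hip (ψ i) (ψ i) = 1) →
      ρ = ∑ i, (p i : ℂ) • Matrix.of (fun x y => ψ i x * conj (ψ i y)) →
      Real.sqrt (2 / ((m : ℝ) * ((m : ℝ) - 1))) * (traceNorm (realign ρ) - 1)
        ≤ ∑ i, p i * concP (ψ i)) ∧
    Real.sqrt (2 / ((m : ℝ) * ((m : ℝ) - 1))) * (traceNorm (realign ρ) - 1)
      ≤ concM ρ := by
  have hann : 0 ≤ (m:ℝ) * ((m:ℝ) - 1) := by
    rcases Nat.eq_zero_or_pos m with h | h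
    · simp [h]
    · have h1 : (1:ℝ) ≤ (m:ℝ) := by exact_mod_cast h
      nlinarith
  have hcK : Real.sqrt (2 / ((m:ℝ) * ((m:ℝ) - 1)))
      * Real.sqrt (((m:ℝ) * ((m:ℝ) - 1)) / 2) ≤ 1 := by
    by_cases ha : (m:ℝ) * ((m:ℝ) - 1) = 0
    · rw [ha]
      norm_num
    · have hpos : 0 < (m:ℝ) * ((m:ℝ) - 1) := lt_of_le_of_ne hann (Ne.symm ha)
      rw [← Real.sqrt_mul (by positivity)]
      rw [show 2 / ((m:ℝ) * ((m:ℝ) - 1)) * (((m:ℝ) * ((m:ℝ) - 1)) / 2) = 1 from by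
        field_simp
        exact div_self ha]
      simp
  have main : ∀ (N : ℕ) (p : Fin N → ℝ) (ψ : Fin N → (Fin m × Fin m → ℂ)),
      (∀ i, 0 < p i) → ∑ i, p i = 1 → (∀ i, hip (ψ i) (ψ i) = 1) →
      ρ = ∑ i, (p i : ℂ) • Matrix.of (fun x y => ψ i x * conj (ψ i y)) →
      Real.sqrt (2 / ((m : ℝ) * ((m : ℝ) - 1))) * (traceNorm (realign ρ) - 1)
        ≤ ∑ i, p i * concP (ψ i) := by
    intro N p ψ hp hps hpsi hdecomp
    have hre : realign ρ
        = ∑ i, (p i : ℂ) • realign (Matrix.of fun x y => ψ i x * conj (ψ i y)) := by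
      ext pq q
      rw [hdecomp]
      simp [realign, Matrix.sum_apply, Matrix.smul_apply]
    have h1 : traceNorm (realign ρ)
        ≤ ∑ i, p i * traceNorm (realign (Matrix.of fun x y => ψ i x * conj (ψ i y))) := by
      rw [hre]
      exact traceNorm_sum_smul_le p (fun i => (hp i).le) _
    have h2 : ∑ i, p i * traceNorm (realign (Matrix.of fun x y => ψ i x * conj (ψ i y)))
        ≤ ∑ i, p i * (1 + Real.sqrt (((m:ℝ) * ((m:ℝ) - 1)) / 2) * concP (ψ i)) :=
      Finset.sum_le_sum fun i _ =>
        mul_le_mul_of_nonneg_left (pure_bound (ψ i) (hpsi i)) (hp i).le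
    have h3 : ∑ i, p i * (1 + Real.sqrt (((m:ℝ) * ((m:ℝ) - 1)) / 2) * concP (ψ i))
        = 1 + Real.sqrt (((m:ℝ) * ((m:ℝ) - 1)) / 2) * ∑ i, p i * concP (ψ i) := by
      simp only [mul_add, mul_one, Finset.sum_add_distrib, hps]
      congr 1
      rw [Finset.mul_sum]
      congr 1; funext i; ring
    have hTN1 : traceNorm (realign ρ) - 1
        ≤ Real.sqrt (((m:ℝ) * ((m:ℝ) - 1)) / 2) * ∑ i, p i * concP (ψ i) := by
      have := (h1.trans h2).trans_eq h3
      linarith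
    have hS0 : 0 ≤ ∑ i, p i * concP (ψ i) :=
      Finset.sum_nonneg fun i _ => mul_nonneg (hp i).le (Real.sqrt_nonneg _)
    have hc0 : 0 ≤ Real.sqrt (2 / ((m:ℝ) * ((m:ℝ) - 1))) := Real.sqrt_nonneg _
    nlinarith [mul_le_mul_of_nonneg_left hTN1 hc0,
      mul_le_mul_of_nonneg_right hcK hS0]
  refine ⟨main, ?_⟩
  have hherm := hρ.1
  have hU1 := (eigV_unitary hherm).1
  have hlam0 : ∀ k, 0 ≤ hherm.eigenvalues k := fun k => hρ.eigenvalues_nonneg k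
  have hlamsum : ∑ k, hherm.eigenvalues k = 1 := by
    have h := trace_herm_eq_sum_eigen hherm
    rw [hρtr] at h
    have h2 := congrArg Complex.re h.symm
    simpa [Complex.re_sum] using h2
  have hρdecomp : ρ = ∑ k, (hherm.eigenvalues k : ℂ) • Matrix.of
      (fun x y => (↑hherm.eigenvectorUnitary : Matrix (Fin m × Fin m) (Fin m × Fin m) ℂ) x k
        * conj ((↑hherm.eigenvectorUnitary : Matrix (Fin m × Fin m) (Fin m × Fin m) ℂ) y k)) := by
    conv_lhs => rw [spectral' hherm]
    ext x y
    rw [Matrix.mul_apply]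
    simp only [Matrix.sum_apply, Matrix.smul_apply, Matrix.of_apply, smul_eq_mul,
      Matrix.mul_diagonal, conjTranspose_apply, Complex.star_def]
    congr 1; funext k; ring
  set lam := hherm.eigenvalues with hlamd
  set Uc : Matrix (Fin m × Fin m) (Fin m × Fin m) ℂ := ↑hherm.eigenvectorUnitary with hUc
  let e := (Fintype.equivFin {k : Fin m × Fin m // lam k ≠ 0}).symm
  have htransfer : ∀ {α : Type} [AddCommMonoid α] (g : (Fin m × Fin m) → α),
      (∀ k, lam k = 0 → g k = 0) →
      ∑ i, g ↑(e i) = ∑ k, g k := by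
    intro α _ g hg
    rw [Equiv.sum_comp e (fun s => g ↑s)]
    rw [← Finset.sum_subtype (Finset.univ.filter (fun k => lam k ≠ 0))
      (by intro x; simp) g]
    exact Finset.sum_filter_of_ne (fun x _ hx h0 => hx (hg x h0))
  have hp0 : ∀ i, 0 < lam ↑(e i) :=
    fun i => lt_of_le_of_ne (hlam0 _) (Ne.symm (e i).2)
  have hsum0 : ∑ i, lam ↑(e i) = 1 := by
    rw [htransfer (fun k => lam k) (fun k h => h)]
    exact hlamsum
  have hψ0 : ∀ i, hip (fun x => Uc x ↑(e i)) (fun x => Uc x ↑(e i)) = 1 := by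
    intro i
    set k := (↑(e i) : Fin m × Fin m)
    have h : (Ucᴴ * Uc) k k = ∑ x, conj (Uc x k) * Uc x k := by
      simp [Matrix.mul_apply, conjTranspose_apply, mul_comm]
    rw [hU1] at h
    rw [hip, ← h, Matrix.one_apply_eq]
  have hdec0 : ρ = ∑ i, (lam ↑(e i) : ℂ) • Matrix.of
      (fun x y => Uc x ↑(e i) * conj (Uc y ↑(e i))) := by
    rw [htransfer (fun k => (lam k : ℂ) • Matrix.of
      (fun x y => Uc x k * conj (Uc y k))) (fun k h => by simp [h])]
    exact hρdecomp
  have hmem : (∑ i, lam ↑(e i) * concP (fun x => Uc x ↑(e i))) ∈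
      { c : ℝ | ∃ (N : ℕ) (p : Fin N → ℝ) (ψ : Fin N → (Fin m × Fin m → ℂ)),
        (∀ i, 0 < p i) ∧ ∑ i, p i = 1 ∧ (∀ i, hip (ψ i) (ψ i) = 1) ∧
        ρ = ∑ i, (p i : ℂ) • Matrix.of (fun x y => ψ i x * conj (ψ i y)) ∧
        c = ∑ i, p i * concP (ψ i) } :=
    ⟨Fintype.card {k : Fin m × Fin m // lam k ≠ 0},
      fun i => lam ↑(e i), fun i x => Uc x ↑(e i), hp0, hsum0, hψ0, hdec0, rfl⟩
  rw [concM]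
  apply le_csInf ⟨_, hmem⟩
  rintro b ⟨N, p, ψ, h1, h2, h3, h4, rfl⟩
  exact main N p ψ h1 h2 h3 h4

end
end

section
/- Let m ≥ 2, 1 ≤ k ≤ m−1, and let ρ_f = ((1−f)/(m²−1))(I − P_m^+) + f·P_m^+ be the isotropic state on ℂ^m⊗ℂ^m with fidelity f > k/m. Then for every pure-state decomposition ρ_f = Σ_i p_i |ψ_i⟩⟨ψ_i| (p_i > 0, Σ_i p_i = 1, ψ_i unit vectors), one has Σ_i p_i C(ψ_i) ≥ √(2m/(m−1)) · (f − k/m); consequently C(ρ_f) ≥ √(2m/(m−1)) · (f − k/m). -/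
open scoped BigOperators ComplexConjugate ComplexOrder
open Finset Matrix

noncomputable section

/-- The maximally entangled vector `ψ_m^+ = (1/√m) ∑ᵢ eᵢ⊗eᵢ`. -/
def maxEnt (m : ℕ) : Fin m × Fin m → ℂ :=
  fun p => if p.1 = p.2 then (((Real.sqrt m)⁻¹ : ℝ) : ℂ) else 0

/-- The projector `P_m^+ = |ψ_m^+⟩⟨ψ_m^+|` onto the maximally entangled state. -/
def Pplus (m : ℕ) : Matrix (Fin m × Fin m) (Fin m × Fin m) ℂ :=
  Matrix.of fun p q => maxEnt m p * conj (maxEnt m q)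

/-- The isotropic state `ρ_f = ((1−f)/(m²−1))(I − P_m^+) + f P_m^+`. -/
def isoState (m : ℕ) (f : ℝ) : Matrix (Fin m × Fin m) (Fin m × Fin m) ℂ :=
  (((1 - f) / ((m : ℝ) ^ 2 - 1) : ℝ) : ℂ) • (1 - Pplus m) + ((f : ℝ) : ℂ) • Pplus m

/-- The isotropic witnesses `W_k^{iso} = (k/m)·I − P_m^+`. -/
def Wiso (m k : ℕ) : Matrix (Fin m × Fin m) (Fin m × Fin m) ℂ :=
  (((k : ℝ) / (m : ℝ) : ℝ) : ℂ) • 1 - Pplus m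

namespace Stmt14Aux

lemma sum_offDiag_split {ι : Type*} [Fintype ι] [DecidableEq ι] (s : ι → ℝ) :
    (∑ i, s i) ^ 2 = ∑ i, (s i)^2 + ∑ p ∈ (Finset.univ : Finset ι).offDiag, s p.1 * s p.2 := by
  rw [sq, Finset.sum_mul_sum, ← Finset.sum_product', ← Finset.diag_union_offDiag (Finset.univ : Finset ι),
    Finset.sum_union (Finset.disjoint_diag_offDiag _)]
  congr 1
  rw [Finset.sum_diag]
  simp [sq]

lemma scalar_ineq {m : ℕ} (hm : 1 ≤ m) (s : Fin m → ℝ) (hs : ∀ i, 0 ≤ s i)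
    (h1 : ∑ i, (s i)^2 = 1) :
    (∑ i, s i)^2 ≤ 1 + Real.sqrt ((m:ℝ)*((m:ℝ)-1)) * Real.sqrt (1 - ∑ i, (s i)^4) := by
  have hoff2 : ∑ p ∈ (Finset.univ : Finset (Fin m)).offDiag, (s p.1)^2 * (s p.2)^2
      = 1 - ∑ i, (s i)^4 := by
    have := sum_offDiag_split (fun i => (s i)^2)
    simp only [h1, one_pow] at this
    have h4 : ∀ i, ((s i)^2)^2 = (s i)^4 := fun i => by ring
    simp only [h4] at this
    linarith
  set T := ∑ p ∈ (Finset.univ : Finset (Fin m)).offDiag, s p.1 * s p.2 with hT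
  have hT0 : 0 ≤ T := Finset.sum_nonneg fun p _ => mul_nonneg (hs _) (hs _)
  have hcs : T^2 ≤ ((m:ℝ)*((m:ℝ)-1)) * (1 - ∑ i, (s i)^4) := by
    have := Finset.sum_mul_sq_le_sq_mul_sq (Finset.univ : Finset (Fin m)).offDiag
      (fun _ => (1:ℝ)) (fun p => s p.1 * s p.2)
    simp only [one_mul, one_pow, Finset.sum_const, nsmul_eq_mul, mul_one] at this
    have hcard : (((Finset.univ : Finset (Fin m)).offDiag.card : ℝ)) = (m:ℝ)*((m:ℝ)-1) := by
      rw [Finset.offDiag_card]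
      simp only [Finset.card_univ, Fintype.card_fin]
      have : m ≤ m * m := Nat.le_mul_of_pos_left m (by omega)
      push_cast [Nat.cast_sub this]
      ring
    calc T^2 ≤ ((Finset.univ : Finset (Fin m)).offDiag.card : ℝ)
        * ∑ p ∈ (Finset.univ : Finset (Fin m)).offDiag, (s p.1 * s p.2)^2 := this
      _ = ((m:ℝ)*((m:ℝ)-1)) * (1 - ∑ i, (s i)^4) := by
          rw [hcard, ← hoff2]; congr 1; exact Finset.sum_congr rfl fun p _ => by ring
  have hrem : 0 ≤ 1 - ∑ i, (s i)^4 := by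
    rw [← hoff2]; exact Finset.sum_nonneg fun p _ => mul_nonneg (sq_nonneg _) (sq_nonneg _)
  have hmm : (0:ℝ) ≤ (m:ℝ)*((m:ℝ)-1) := by
    have : (1:ℝ) ≤ (m:ℝ) := by exact_mod_cast hm
    nlinarith
  have hTle : T ≤ Real.sqrt ((m:ℝ)*((m:ℝ)-1)) * Real.sqrt (1 - ∑ i, (s i)^4) := by
    rw [← Real.sqrt_mul hmm]
    exact Real.le_sqrt_of_sq_le hcs
  have := sum_offDiag_split s
  rw [h1] at this
  linarith

lemma exists_diag {m : ℕ} (M : Matrix (Fin m) (Fin m) ℂ) :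
    ∃ (lam : Fin m → ℝ) (U : Matrix (Fin m) (Fin m) ℂ),
      U * star U = 1 ∧ star U * U = 1 ∧
      M * Mᴴ = U * Matrix.diagonal (fun i => (lam i : ℂ)) * star U := by
  have hA : (M * Mᴴ).IsHermitian := isHermitian_mul_conjTranspose_self M
  refine ⟨hA.eigenvalues, hA.eigenvectorUnitary, 
    (Unitary.mem_iff.mp hA.eigenvectorUnitary.2).2,
    (Unitary.mem_iff.mp hA.eigenvectorUnitary.2).1, ?_⟩
  have := hA.spectral_theorem
  rw [Unitary.conjStarAlgAut_apply] at this
  exact this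

lemma trace_bound {m : ℕ} (M : Matrix (Fin m) (Fin m) ℂ) :
    ∃ lam : Fin m → ℝ, (∀ i, 0 ≤ lam i) ∧
      Matrix.trace (M * Mᴴ) = ((∑ i, lam i : ℝ) : ℂ) ∧
      Matrix.trace ((M * Mᴴ) * (M * Mᴴ)) = ((∑ i, (lam i)^2 : ℝ) : ℂ) ∧
      ‖Matrix.trace M‖ ≤ ∑ i, Real.sqrt (lam i) := by
  obtain ⟨lam, U, hU1, hU2, hspec⟩ := exists_diag M
  set D : Matrix (Fin m) (Fin m) ℂ := Matrix.diagonal (fun i => (lam i : ℂ)) with hD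
  set N : Matrix (Fin m) (Fin m) ℂ := star U * M * U with hN
  have hNN : N * star N = D := by
    calc N * star N = star U * M * (U * star U) * star M * (star (star U)) := by
          simp only [hN, Matrix.star_mul, star_star]; noncomm_ring
      _ = star U * (M * star M) * U := by rw [hU1, star_star]; noncomm_ring
      _ = star U * (U * D * star U) * U := by
          have hspec' : M * star M = U * D * star U := by
            rw [Matrix.star_eq_conjTranspose]; exact hspec
          rw [hspec']
      _ = (star U * U) * D * (star U * U) := by noncomm_ring
      _ = D := by rw [hU2]; simp
  have hrow : ∀ i, (∑ z, Complex.normSq (N i z)) = lam i := by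
    intro i
    have := congrFun (congrFun hNN i) i
    rw [Matrix.mul_apply] at this
    simp only [hD, Matrix.diagonal_apply_eq] at this
    have h2 : (∑ z, N i z * star N z i) = ((∑ z, Complex.normSq (N i z) : ℝ) : ℂ) := by
      push_cast
      refine Finset.sum_congr rfl fun z _ => ?_
      rw [Matrix.star_apply, ← Complex.mul_conj]; rfl
    rw [h2] at this
    exact_mod_cast this
  have hlam0 : ∀ i, 0 ≤ lam i := fun i => by
    rw [← hrow i]; exact Finset.sum_nonneg fun z _ => Complex.normSq_nonneg _
  refine ⟨lam, hlam0, ?_, ?_, ?_⟩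
  · rw [hspec, Matrix.trace_mul_cycle, hU2, Matrix.one_mul]
    simp [hD, Matrix.trace_diagonal]
  · rw [hspec]
    have : U * D * star U * (U * D * star U) = U * (D * D) * star U := by
      calc U * D * star U * (U * D * star U) = U * D * (star U * U) * D * star U := by noncomm_ring
        _ = U * (D * D) * star U := by rw [hU2]; noncomm_ring
    rw [this, Matrix.trace_mul_cycle, hU2, Matrix.one_mul]
    simp only [hD, Matrix.diagonal_mul_diagonal, Matrix.trace_diagonal]
    push_cast
    refine Finset.sum_congr rfl fun i _ => by ring
  · have htrN : Matrix.trace N = Matrix.trace M := by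
      rw [hN, Matrix.trace_mul_cycle, hU1, Matrix.one_mul]
    rw [← htrN, Matrix.trace]
    refine le_trans (norm_sum_le _ _) (Finset.sum_le_sum fun i _ => ?_)
    have h1 : ‖N i i‖ ^ 2 ≤ lam i := by
      rw [← hrow i, Complex.sq_norm]
      exact Finset.single_le_sum (fun z _ => Complex.normSq_nonneg _) (Finset.mem_univ i)
    have := Real.sqrt_le_sqrt h1
    rwa [Real.sqrt_sq (norm_nonneg _)] at this


lemma pure_bound {m : ℕ} (hm : 1 ≤ m) (ψ : Fin m × Fin m → ℂ) (hψ : hip ψ ψ = 1) :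
    (m:ℝ) * ‖hip (maxEnt m) ψ‖^2 - 1
      ≤ Real.sqrt ((m:ℝ)*((m:ℝ)-1)/2) * concP ψ := by
  classical
  obtain ⟨lam, hlam0, htr1c, htr2c, habs⟩ := trace_bound (Matrix.of fun x y => ψ (x, y))
  set M : Matrix (Fin m) (Fin m) ℂ := Matrix.of fun x y => ψ (x, y) with hM
  have hA0 : rhoA ψ = M * Mᴴ := by
    ext x y
    simp [rhoA, Matrix.mul_apply, Matrix.conjTranspose_apply, hM]
  have hhip : hip ψ ψ = Matrix.trace (M * Mᴴ) := by
    rw [Matrix.trace]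
    rw [hip, Fintype.sum_prod_type]
    refine Finset.sum_congr rfl fun x _ => ?_
    rw [Matrix.diag_apply, Matrix.mul_apply]
    refine Finset.sum_congr rfl fun z _ => ?_
    simp [hM, Matrix.conjTranspose_apply, mul_comm]
  have hsum1 : ∑ i, lam i = 1 := by
    have : ((∑ i, lam i : ℝ) : ℂ) = 1 := by rw [← htr1c, ← hhip, hψ]
    exact_mod_cast this
  have hsum2 : (Matrix.trace (rhoA ψ * rhoA ψ)).re = ∑ i, (lam i)^2 := by
    rw [hA0, htr2c, Complex.ofReal_re]
  -- scalar inequality with s = sqrt lam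
  have hs1 : ∑ i, (Real.sqrt (lam i))^2 = 1 := by
    rw [← hsum1]; exact Finset.sum_congr rfl fun i _ => Real.sq_sqrt (hlam0 i)
  have hs4 : ∑ i, (Real.sqrt (lam i))^4 = ∑ i, (lam i)^2 := by
    refine Finset.sum_congr rfl fun i _ => ?_
    rw [show (4:ℕ) = 2*2 from rfl, pow_mul, Real.sq_sqrt (hlam0 i)]
  have hscal := scalar_ineq hm (fun i => Real.sqrt (lam i)) (fun i => Real.sqrt_nonneg _) hs1
  rw [hs4] at hscal
  -- fidelity
  have htrM : Matrix.trace M = ∑ i, ψ (i, i) := by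
    rw [Matrix.trace]; rfl
  have hhipm : hip (maxEnt m) ψ = (((Real.sqrt m)⁻¹ : ℝ) : ℂ) * ∑ i, ψ (i, i) := by
    rw [hip, Fintype.sum_prod_type, Finset.mul_sum]
    refine Finset.sum_congr rfl fun x _ => ?_
    rw [Finset.sum_eq_single x]
    · simp [maxEnt, Complex.conj_ofReal]
    · intro y _ hy
      simp [maxEnt, Ne.symm hy]
    · simp
  have hm0 : (0:ℝ) < (m:ℝ) := by exact_mod_cast Nat.lt_of_lt_of_le Nat.zero_lt_one hm
  have habs2 : (m:ℝ) * ‖hip (maxEnt m) ψ‖^2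
      = ‖∑ i, ψ (i, i)‖ ^ 2 := by
    rw [hhipm, norm_mul]
    rw [Complex.norm_real, Real.norm_eq_abs, abs_of_nonneg (by positivity)]
    rw [mul_pow]
    rw [inv_pow, Real.sq_sqrt hm0.le]
    field_simp
  have hfin : ‖∑ i, ψ (i, i)‖ ^ 2 ≤ (∑ i, Real.sqrt (lam i))^2 := by
    rw [← htrM]
    exact pow_le_pow_left₀ (norm_nonneg _) habs 2
  have hconc : Real.sqrt ((m:ℝ)*((m:ℝ)-1)/2) * concP ψ
      = Real.sqrt ((m:ℝ)*((m:ℝ)-1)) * Real.sqrt (1 - ∑ i, (lam i)^2) := by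
    have h1m : (1:ℝ) ≤ (m:ℝ) := by exact_mod_cast hm
    have hnn : (0:ℝ) ≤ (m:ℝ)*((m:ℝ)-1) := by nlinarith
    rw [concP, hsum2]
    rw [← Real.sqrt_mul (by linarith : (0:ℝ) ≤ (m:ℝ)*((m:ℝ)-1)/2)]
    rw [← Real.sqrt_mul hnn]
    congr 1
    ring
  rw [habs2, hconc]
  linarith

def Phi {m : ℕ} (ρ : Matrix (Fin m × Fin m) (Fin m × Fin m) ℂ) : ℂ :=
  ∑ x, ∑ y, conj (maxEnt m x) * maxEnt m y * ρ x y

lemma Phi_add {m : ℕ} (A B : Matrix (Fin m × Fin m) (Fin m × Fin m) ℂ) :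
    Phi (A + B) = Phi A + Phi B := by
  simp [Phi, Matrix.add_apply, mul_add, Finset.sum_add_distrib]

lemma Phi_sub {m : ℕ} (A B : Matrix (Fin m × Fin m) (Fin m × Fin m) ℂ) :
    Phi (A - B) = Phi A - Phi B := by
  simp [Phi, Matrix.sub_apply, mul_sub, Finset.sum_sub_distrib]

lemma Phi_smul {m : ℕ} (c : ℂ) (A : Matrix (Fin m × Fin m) (Fin m × Fin m) ℂ) :
    Phi (c • A) = c * Phi A := by
  simp only [Phi, Matrix.smul_apply, smul_eq_mul, Finset.mul_sum]
  refine Finset.sum_congr rfl fun x _ => Finset.sum_congr rfl fun y _ => by ring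

lemma Phi_sum {m N : ℕ} (A : Fin N → Matrix (Fin m × Fin m) (Fin m × Fin m) ℂ) :
    Phi (∑ i, A i) = ∑ i, Phi (A i) := by
  have h : ∀ x y, conj (maxEnt m x) * maxEnt m y * (∑ i, A i) x y
      = ∑ i, conj (maxEnt m x) * maxEnt m y * A i x y := by
    intro x y; rw [Matrix.sum_apply, Finset.mul_sum]
  simp only [Phi, h]
  calc (∑ x, ∑ y, ∑ i, conj (maxEnt m x) * maxEnt m y * A i x y)
      = ∑ x, ∑ i, ∑ y, conj (maxEnt m x) * maxEnt m y * A i x y :=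
        Finset.sum_congr rfl fun x _ => Finset.sum_comm
    _ = ∑ i, ∑ x, ∑ y, conj (maxEnt m x) * maxEnt m y * A i x y := Finset.sum_comm

lemma Phi_outer {m : ℕ} (ψ : Fin m × Fin m → ℂ) :
    Phi (Matrix.of fun x y => ψ x * conj (ψ y))
      = ((‖hip (maxEnt m) ψ‖ ^ 2 : ℝ) : ℂ) := by
  have : Phi (Matrix.of fun x y => ψ x * conj (ψ y))
      = hip (maxEnt m) ψ * conj (hip (maxEnt m) ψ) := by
    rw [Phi, hip, Finset.sum_mul,
      map_sum (starRingEnd ℂ) (fun i => conj (maxEnt m i) * ψ i) Finset.univ]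
    refine Finset.sum_congr rfl fun x _ => ?_
    rw [Finset.mul_sum]
    refine Finset.sum_congr rfl fun y _ => ?_
    simp only [Matrix.of_apply, _root_.map_mul, Complex.conj_conj]
    ring
  rw [this, Complex.mul_conj, Complex.sq_norm]

lemma hip_maxEnt_self {m : ℕ} (hm : 1 ≤ m) : hip (maxEnt m) (maxEnt m) = 1 := by
  have hm0 : (0:ℝ) < (m:ℝ) := by exact_mod_cast Nat.lt_of_lt_of_le Nat.zero_lt_one hm
  rw [hip, Fintype.sum_prod_type]
  have : ∀ x : Fin m, ∑ y : Fin m, conj (maxEnt m (x, y)) * maxEnt m (x, y)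
      = (((m:ℝ)⁻¹ : ℝ) : ℂ) := by
    intro x
    rw [Finset.sum_eq_single x]
    · simp only [maxEnt, if_true, eq_self_iff_true, Complex.conj_ofReal, if_pos]
      rw [← Complex.ofReal_mul, ← Real.sqrt_inv, Real.mul_self_sqrt (by positivity)]
    · intro y _ hy
      simp [maxEnt, Ne.symm hy]
    · simp
  rw [Finset.sum_congr rfl fun x _ => this x]
  simp only [Finset.sum_const, Finset.card_univ, Fintype.card_fin, nsmul_eq_mul]
  rw [← Complex.ofReal_natCast, ← Complex.ofReal_mul, mul_inv_cancel₀ hm0.ne']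
  norm_num

lemma Phi_one {m : ℕ} (hm : 1 ≤ m) : Phi (1 : Matrix (Fin m × Fin m) (Fin m × Fin m) ℂ) = 1 := by
  rw [Phi]
  have : ∀ x : Fin m × Fin m, ∑ y, conj (maxEnt m x) * maxEnt m y
      * (1 : Matrix (Fin m × Fin m) (Fin m × Fin m) ℂ) x y = conj (maxEnt m x) * maxEnt m x := by
    intro x
    rw [Finset.sum_eq_single x]
    · simp [Matrix.one_apply]
    · intro y _ hy
      simp [Matrix.one_apply, Ne.symm hy]
    · simp
  rw [Finset.sum_congr rfl fun x _ => this x, ← hip, hip_maxEnt_self hm]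

lemma Phi_Pplus {m : ℕ} (hm : 1 ≤ m) : Phi (Pplus m) = 1 := by
  have : Pplus m = Matrix.of fun x y => maxEnt m x * conj (maxEnt m y) := rfl
  rw [this, Phi_outer, hip_maxEnt_self hm]
  norm_num

lemma fidelity {m N : ℕ} (hm : 1 ≤ m) (f : ℝ) (p : Fin N → ℝ)
    (ψ : Fin N → (Fin m × Fin m → ℂ))
    (hdec : isoState m f = ∑ i, (p i : ℂ) • Matrix.of (fun x y => ψ i x * conj (ψ i y))) :
    ∑ i, p i * ‖hip (maxEnt m) (ψ i)‖ ^ 2 = f := by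
  have h := congrArg Phi hdec
  rw [isoState, Phi_add, Phi_smul, Phi_smul, Phi_sub, Phi_one hm, Phi_Pplus hm] at h
  rw [Phi_sum] at h
  simp only [Phi_smul, Phi_outer] at h
  have h2 : (f : ℂ) = ∑ i, (p i : ℂ)
      * ((‖hip (maxEnt m) (ψ i)‖ ^ 2 : ℝ) : ℂ) := by
    rw [← h]; ring
  push_cast at h2
  exact_mod_cast h2.symm

lemma decomp_bound {m k : ℕ} (hm : 2 ≤ m) (hk1 : 1 ≤ k) (f : ℝ)
    (N : ℕ) (p : Fin N → ℝ) (ψ : Fin N → (Fin m × Fin m → ℂ))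
    (hp : ∀ i, 0 < p i) (hsum : ∑ i, p i = 1) (hunit : ∀ i, hip (ψ i) (ψ i) = 1)
    (hdec : isoState m f = ∑ i, (p i : ℂ) • Matrix.of (fun x y => ψ i x * conj (ψ i y))) :
    Real.sqrt (2 * (m : ℝ) / ((m : ℝ) - 1)) * (f - (k : ℝ) / (m : ℝ))
      ≤ ∑ i, p i * concP (ψ i) := by
  have hm2 : (2:ℝ) ≤ (m:ℝ) := by exact_mod_cast hm
  have hfid := fidelity (by omega) f p ψ hdec
  set F : Fin N → ℝ := fun i => ‖hip (maxEnt m) (ψ i)‖ ^ 2 with hF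
  set c := Real.sqrt ((m:ℝ)*((m:ℝ)-1)/2) with hc
  have hcpos : 0 < c := Real.sqrt_pos.mpr (by nlinarith)
  have hpt : ∀ i, ((m:ℝ) * F i - 1)/c ≤ concP (ψ i) := by
    intro i
    rw [div_le_iff₀ hcpos]
    have := pure_bound (by omega) (ψ i) (hunit i)
    simp only [hF]
    linarith
  have hstep : ∑ i, p i * (((m:ℝ) * F i - 1)/c) ≤ ∑ i, p i * concP (ψ i) :=
    Finset.sum_le_sum fun i _ => mul_le_mul_of_nonneg_left (hpt i) (hp i).le
  have hval : ∑ i, p i * (((m:ℝ) * F i - 1)/c) = ((m:ℝ)*f - 1)/c := by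
    calc ∑ i, p i * (((m:ℝ) * F i - 1)/c)
        = (∑ i, ((m:ℝ) * (p i * F i) - p i)) / c := by
          rw [Finset.sum_div]
          exact Finset.sum_congr rfl fun i _ => by field_simp
      _ = ((m:ℝ) * ∑ i, p i * F i - ∑ i, p i)/c := by
          rw [Finset.sum_sub_distrib, ← Finset.mul_sum]
      _ = ((m:ℝ)*f - 1)/c := by rw [hfid, hsum]
  have hprod : c * Real.sqrt (2*(m:ℝ)/((m:ℝ)-1)) = (m:ℝ) := by
    rw [hc, ← Real.sqrt_mul (by nlinarith)]
    have h1 : ((m:ℝ)-1) ≠ 0 := by linarith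
    rw [show ((m:ℝ)*((m:ℝ)-1)/2) * (2*(m:ℝ)/((m:ℝ)-1)) = (m:ℝ)^2 by
      field_simp]
    exact Real.sqrt_sq (by linarith)
  have htarget : Real.sqrt (2*(m:ℝ)/((m:ℝ)-1)) * (f - (k:ℝ)/(m:ℝ)) = ((m:ℝ)*f - k)/c := by
    rw [eq_div_iff hcpos.ne']
    calc Real.sqrt (2*(m:ℝ)/((m:ℝ)-1)) * (f - (k:ℝ)/(m:ℝ)) * c
        = (f - (k:ℝ)/(m:ℝ)) * (c * Real.sqrt (2*(m:ℝ)/((m:ℝ)-1))) := by ring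
      _ = (f - (k:ℝ)/(m:ℝ)) * (m:ℝ) := by rw [hprod]
      _ = (m:ℝ)*f - k := by field_simp
  rw [htarget]
  have hk' : (1:ℝ) ≤ (k:ℝ) := by exact_mod_cast hk1
  have hmono : ((m:ℝ)*f - k)/c ≤ ((m:ℝ)*f - 1)/c :=
    (div_le_div_iff_of_pos_right hcpos).mpr (by linarith)
  linarith

lemma exists_decomp {m : ℕ} (hm : 2 ≤ m) (f : ℝ) (hf1 : f ≤ 1) (hfm : 1/(m:ℝ) < f) :
    ∃ (N : ℕ) (p : Fin N → ℝ) (ψ : Fin N → (Fin m × Fin m → ℂ)),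
      (∀ i, 0 < p i) ∧ ∑ i, p i = 1 ∧ (∀ i, hip (ψ i) (ψ i) = 1) ∧
      isoState m f = ∑ i, (p i : ℂ) • Matrix.of (fun x y => ψ i x * conj (ψ i y)) := by
  classical
  have hm2 : (2:ℝ) ≤ (m:ℝ) := by exact_mod_cast hm
  have hPouter : Pplus m = Matrix.of fun x y => maxEnt m x * conj (maxEnt m y) := rfl
  rcases eq_or_lt_of_le hf1 with hfeq | hflt
  · -- f = 1
    refine ⟨1, fun _ => 1, fun _ => maxEnt m, fun _ => one_pos, by simp, 
      fun _ => hip_maxEnt_self (by omega), ?_⟩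
    rw [isoState, ← hfeq]
    simp [hPouter]
  · -- f < 1
    set α := (1 - f)/((m:ℝ)^2 - 1) with hα
    have hden : (0:ℝ) < (m:ℝ)^2 - 1 := by nlinarith
    have hα0 : 0 < α := div_pos (by linarith) hden
    have hβ0 : 0 < f - α := by
      rw [hα, sub_pos, div_lt_iff₀ hden]
      have : (1:ℝ) < f * (m:ℝ) := by
        rw [one_div] at hfm
        calc (1:ℝ) = (m:ℝ)⁻¹ * (m:ℝ) := by field_simp
          _ < f * (m:ℝ) := by
            apply mul_lt_mul_of_pos_right hfm (by linarith)
      nlinarith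
    set q : Fin (m*m) → Fin m × Fin m := fun j => finProdFinEquiv.symm j with hq
    set e : Fin (m*m) → (Fin m × Fin m → ℂ) := fun j x => if x = q j then 1 else 0 with he
    refine ⟨m*m + 1,
      fun i => if (i:ℕ) < m*m then α else f - α,
      fun i => if h : (i:ℕ) < m*m then e ⟨i, h⟩ else maxEnt m, ?_, ?_, ?_, ?_⟩
    · intro i
      by_cases h : (i:ℕ) < m*m <;> simp [h, hα0, hβ0]
    · rw [Fin.sum_univ_castSucc]
      have h1 : ∀ j : Fin (m*m),
          (if ((Fin.castSucc j : Fin (m*m+1)):ℕ) < m*m then α else f - α) = α := by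
        intro j; rw [if_pos]; simpa using j.isLt
      rw [Finset.sum_congr rfl fun j _ => h1 j]
      simp only [Finset.sum_const, Finset.card_univ, Fintype.card_fin, nsmul_eq_mul,
        Fin.val_last, lt_irrefl, if_false, if_neg (lt_irrefl (m*m))]
      have : ((m*m : ℕ):ℝ) = (m:ℝ)^2 := by push_cast; ring
      rw [this, hα]
      field_simp
      ring
    · intro i
      by_cases h : (i:ℕ) < m*m
      · simp only [dif_pos h]
        rw [hip, Finset.sum_eq_single (q ⟨i, h⟩)]
        · simp [he]
        · intro y _ hy; simp [he, hy]
        · simp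
      · simp only [dif_neg h]; exact hip_maxEnt_self (by omega)
    · have hid : (∑ j : Fin (m*m), Matrix.of (fun x y => e j x * conj (e j y)))
          = (1 : Matrix (Fin m × Fin m) (Fin m × Fin m) ℂ) := by
        ext x y
        rw [Matrix.sum_apply]
        have hswap : (∑ j : Fin (m*m), Matrix.of (fun x y => e j x * conj (e j y)) x y)
            = ∑ r : Fin m × Fin m,
              (if x = r then (1:ℂ) else 0) * conj (if y = r then (1:ℂ) else 0) :=
          Fintype.sum_equiv finProdFinEquiv.symm _ _ (fun j => by simp [he, hq])
        rw [hswap]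
        by_cases hxy : x = y
        · subst hxy
          rw [Finset.sum_eq_single x]
          · simp
          · intro r _ hr; simp [Ne.symm hr]
          · simp
        · rw [Finset.sum_eq_zero]
          · simp [Matrix.one_apply, hxy]
          · intro r _
            by_cases hx : x = r
            · subst hx
              have hyx : ¬ y = x := fun hh => hxy hh.symm
              simp [hyx]
            · simp [hx]
      rw [Fin.sum_univ_castSucc]
      have h2 : ∀ j : Fin (m*m),
          ((if ((Fin.castSucc j : Fin (m*m+1)):ℕ) < m*m then α else f - α : ℝ) : ℂ) •
            Matrix.of (fun x y =>
              (if h : ((Fin.castSucc j : Fin (m*m+1)):ℕ) < m*m then e ⟨_, h⟩ else maxEnt m) x *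
              conj ((if h : ((Fin.castSucc j : Fin (m*m+1)):ℕ) < m*m then e ⟨_, h⟩ else maxEnt m) y))
          = (α : ℂ) • Matrix.of (fun x y => e j x * conj (e j y)) := by
        intro j
        have hj : ((Fin.castSucc j : Fin (m*m+1)):ℕ) < m*m := by simpa using j.isLt
        have hjj : (⟨((Fin.castSucc j : Fin (m*m+1)):ℕ), hj⟩ : Fin (m*m)) = j := by
          apply Fin.ext; simp
        rw [if_pos hj, dif_pos hj, hjj]
      rw [Finset.sum_congr rfl fun j _ => h2 j]
      rw [← Finset.smul_sum, hid]
      have hlast : ¬ ((Fin.last (m*m) : Fin (m*m+1)):ℕ) < m*m := by simp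
      simp only [if_neg hlast, dif_neg hlast]
      rw [← hPouter, isoState, ← hα]
      have hcast : ((f - α:ℝ):ℂ) = (f:ℂ) - (α:ℂ) := by push_cast; ring
      rw [hcast, smul_sub, sub_smul]
      abel

end Stmt14Aux

/-- For the isotropic state `ρ_f` with fidelity `f > k/m` (`m ≥ 2`,
`1 ≤ k ≤ m−1`), every pure-state decomposition satisfies
`∑ᵢ pᵢ C(ψᵢ) ≥ √(2m/(m−1)) (f − k/m)`, and hence
`C(ρ_f) ≥ √(2m/(m−1)) (f − k/m)`. -/
theorem stmt14 {m k : ℕ} (hm : 2 ≤ m) (hk1 : 1 ≤ k) (hk2 : k ≤ m - 1)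
    (f : ℝ) (hf0 : 0 ≤ f) (hf1 : f ≤ 1) (hf : (k : ℝ) / (m : ℝ) < f) :
    (∀ (N : ℕ) (p : Fin N → ℝ) (ψ : Fin N → (Fin m × Fin m → ℂ)),
      (∀ i, 0 < p i) → ∑ i, p i = 1 → (∀ i, hip (ψ i) (ψ i) = 1) →
      isoState m f = ∑ i, (p i : ℂ) • Matrix.of (fun x y => ψ i x * conj (ψ i y)) →
      Real.sqrt (2 * (m : ℝ) / ((m : ℝ) - 1)) * (f - (k : ℝ) / (m : ℝ))
        ≤ ∑ i, p i * concP (ψ i)) ∧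
    Real.sqrt (2 * (m : ℝ) / ((m : ℝ) - 1)) * (f - (k : ℝ) / (m : ℝ))
      ≤ concM (isoState m f) := by
  have hm0 : (0:ℝ) < (m:ℝ) := by exact_mod_cast (by omega : 0 < m)
  have hpart1 : ∀ (N : ℕ) (p : Fin N → ℝ) (ψ : Fin N → (Fin m × Fin m → ℂ)),
      (∀ i, 0 < p i) → ∑ i, p i = 1 → (∀ i, hip (ψ i) (ψ i) = 1) →
      isoState m f = ∑ i, (p i : ℂ) • Matrix.of (fun x y => ψ i x * conj (ψ i y)) →
      Real.sqrt (2 * (m : ℝ) / ((m : ℝ) - 1)) * (f - (k : ℝ) / (m : ℝ))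
        ≤ ∑ i, p i * concP (ψ i) :=
    fun N p ψ hp hs hu hd => Stmt14Aux.decomp_bound hm hk1 f N p ψ hp hs hu hd
  refine ⟨hpart1, ?_⟩
  have h1m : 1/(m:ℝ) < f := by
    refine lt_of_le_of_lt ?_ hf
    have hk' : (1:ℝ) ≤ (k:ℝ) := by exact_mod_cast hk1
    gcongr
  obtain ⟨N, p, ψ, hp, hs, hu, hd⟩ := Stmt14Aux.exists_decomp hm f hf1 h1m
  rw [concM]
  apply le_csInf
  · exact ⟨∑ i, p i * concP (ψ i), N, p, ψ, hp, hs, hu, hd, rfl⟩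
  · rintro b ⟨N', p', ψ', hp', hs', hu', hd', rfl⟩
    exact hpart1 N' p' ψ' hp' hs' hu' hd'

end
end

section
/- Let d ≥ 3, γ > 0, 1 ≤ k ≤ d−2, and let ρ_γ = (1/N_γ) Σ_{i,j=1}^d |i⟩⟨j| ⊗ A_{ij}^γ on ℂ^d⊗ℂ^d, where A_{ij}^γ = |i⟩⟨j| for i ≠ j, A_{11}^γ = |1⟩⟨1| + a_γ|2⟩⟨2| + Σ_{ℓ=3}^{d−1}|ℓ⟩⟨ℓ| + b_γ|d⟩⟨d|, A_{jj}^γ = S^{j−1} A_{11}^γ S^{†(j−1)} with S|k⟩ = |k+1⟩ (mod d), a_γ = (γ² + d − 1)/d, b_γ = (γ^{-2} + d − 1)/d, and N_γ = d² − 2 + γ² + γ^{-2}. Let W_{d,k} = Σ_{i,j=1}^d |i⟩⟨j| ⊗ X_{ij}^{d,k}, where X_{ii}^{d,k} = (d−k−1)|i⟩⟨i| + Σ_{ℓ=1}^k |i+ℓ⟩⟨i+ℓ| (mod d) and X_{ij}^{d,k} = −|i⟩⟨j| for i ≠ j. Then Tr(W_{d,k} ρ_γ) = (γ² − 1)/(d²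 − 2 + γ² + γ^{-2}); in particular W_{d,k} detects ρ_γ exactly when 0 < γ < 1. -/
open scoped BigOperators ComplexConjugate ComplexOrder
open Finset Matrix

noncomputable section

/-- Diagonal of the block `A₁₁^γ = |1⟩⟨1| + a_γ|2⟩⟨2| + ∑_{ℓ=3}^{d−1}|ℓ⟩⟨ℓ| + b_γ|d⟩⟨d|`
(0-based: entry `1` carries `a_γ = (γ²+d−1)/d`, entry `d−1` carries
`b_γ = (γ⁻²+d−1)/d`, all other entries are `1`). -/
def cDiag (d : ℕ) (γ : ℝ) : Fin d → ℝ :=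
  fun t => if (t : ℕ) = 1 then (γ ^ 2 + (d : ℝ) - 1) / (d : ℝ)
    else if (t : ℕ) = d - 1 then (γ⁻¹ ^ 2 + (d : ℝ) - 1) / (d : ℝ) else 1

/-- The blocks `A_{ij}^γ`: `A_{ij}^γ = |i⟩⟨j|` for `i ≠ j`, and
`A_{jj}^γ = S^j A₀₀^γ S^{†j}` with `S` the cyclic shift, i.e.
`(A_{jj}^γ)_{x,y} = (A₀₀^γ)_{x−j,y−j}` (indices mod `d`). -/
def Ablk (d : ℕ) [NeZero d] (γ : ℝ) : Fin d → Fin d → Matrix (Fin d) (Fin d) ℂ :=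
  fun i j =>
    if i = j then
      Matrix.of fun x y => if x = y then ((cDiag d γ (x - i) : ℝ) : ℂ) else 0
    else Matrix.single i j 1

/-- The state `ρ_γ = (1/N_γ) ∑_{i,j} |i⟩⟨j| ⊗ A_{ij}^γ`,
`N_γ = d² − 2 + γ² + γ⁻²`. -/
def rhoGam (d : ℕ) [NeZero d] (γ : ℝ) : Matrix (Fin d × Fin d) (Fin d × Fin d) ℂ :=
  (((((d : ℝ) ^ 2 - 2 + γ ^ 2 + γ⁻¹ ^ 2)⁻¹ : ℝ)) : ℂ) •
    Matrix.of fun p q => Ablk d γ p.1 q.1 p.2 q.2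

/-- The blocks `X_{ij}^{d,k}`: `X_{ii}^{d,k} = (d−k−1)|i⟩⟨i| + ∑_{ℓ=1}^k |i+ℓ⟩⟨i+ℓ|`
(mod `d`) and `X_{ij}^{d,k} = −|i⟩⟨j|` for `i ≠ j`. -/
def Xblk (d k : ℕ) [NeZero d] : Fin d → Fin d → Matrix (Fin d) (Fin d) ℂ :=
  fun i j =>
    if i = j then
      ((((d : ℝ) - (k : ℝ) - 1 : ℝ)) : ℂ) • Matrix.single i i 1
        + ∑ ℓ ∈ Finset.Icc 1 k,
            Matrix.single (i + (Fin.ofNat d ℓ)) (i + (Fin.ofNat d ℓ)) 1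
    else -Matrix.single i j 1

/-- The witness `W_{d,k} = ∑_{i,j} |i⟩⟨j| ⊗ X_{ij}^{d,k}`. -/
def Wdk (d k : ℕ) [NeZero d] : Matrix (Fin d × Fin d) (Fin d × Fin d) ℂ :=
  Matrix.of fun p q => Xblk d k p.1 q.1 p.2 q.2

lemma offdiag_sum (d k : ℕ) [NeZero d] (γ : ℝ) (i j : Fin d) (h : i ≠ j) :
    ∑ x : Fin d, ∑ y : Fin d, Xblk d k i j x y * Ablk d γ j i y x = -1 := by
  simp only [Xblk, Ablk, if_neg h, if_neg (Ne.symm h)]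
  simp [Matrix.single, Matrix.of_apply, ite_and, mul_ite, Finset.sum_ite_eq]
lemma cDiag_zero (d : ℕ) [NeZero d] (hd : 3 ≤ d) (γ : ℝ) : cDiag d γ 0 = 1 := by
  have h0 : ((0 : Fin d) : ℕ) = 0 := by simp
  simp only [cDiag, h0]
  rw [if_neg (by omega), if_neg (by omega)]

lemma cDiag_ell (d : ℕ) [NeZero d] (hd : 3 ≤ d) (γ : ℝ) (ℓ : ℕ) (h1 : 1 ≤ ℓ)
    (h2 : ℓ ≤ d - 2) :
    cDiag d γ (Fin.ofNat d ℓ) = if ℓ = 1 then (γ ^ 2 + (d : ℝ) - 1) / d else 1 := by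
  have hv : (((Fin.ofNat d ℓ)) : ℕ) = ℓ := by
    rw [Fin.val_ofNat, Nat.mod_eq_of_lt (by omega)]
  simp only [cDiag, hv]
  by_cases h : ℓ = 1
  · simp [h]
  · rw [if_neg h, if_neg (by omega), if_neg h]

lemma diag_sum (d k : ℕ) [NeZero d] (hd : 3 ≤ d) (hk1 : 1 ≤ k) (hk2 : k ≤ d - 2)
    (γ : ℝ) (i : Fin d) :
    ∑ x : Fin d, ∑ y : Fin d, Xblk d k i i x y * Ablk d γ i i y x
      = (d : ℂ) - 2 + (((γ ^ 2 + (d : ℝ) - 1) / d : ℝ) : ℂ) := by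
  simp only [Xblk, Ablk, if_pos rfl, Matrix.of_apply, Matrix.add_apply, Matrix.smul_apply,
    Matrix.sum_apply, Matrix.single, smul_eq_mul, add_mul, Finset.sum_mul,
    mul_ite, ite_mul, mul_zero, zero_mul, mul_one, one_mul, ite_and,
    Finset.sum_ite_eq', Finset.mem_univ, if_pos, Finset.sum_add_distrib]
  have dup : ∀ (c : Prop) [Decidable c] (a : ℂ),
      (if c then if c then a else 0 else 0) = if c then a else 0 := by
    intros c _ a; split_ifs <;> rfl
  simp only [dup]
  rw [Finset.sum_ite_eq, if_pos (Finset.mem_univ i), sub_self, cDiag_zero d hd γ,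
    Finset.sum_comm]
  have step2 : ∀ ℓ ∈ Finset.Icc 1 k,
      (∑ x : Fin d, if i + (Fin.ofNat d ℓ) = x then ((cDiag d γ (x - i) : ℝ) : ℂ) else 0)
      = if ℓ = 1 then (((γ ^ 2 + (d : ℝ) - 1) / d : ℝ) : ℂ) else 1 := by
    intro ℓ hℓ
    rw [Finset.sum_ite_eq, if_pos (Finset.mem_univ _), add_sub_cancel_left]
    rw [Finset.mem_Icc] at hℓ
    rw [cDiag_ell d hd γ ℓ hℓ.1 (le_trans hℓ.2 hk2)]
    split_ifs <;> simp
  rw [Finset.sum_congr rfl step2]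
  have step3 : (∑ ℓ ∈ Finset.Icc 1 k, if ℓ = 1 then (((γ ^ 2 + (d : ℝ) - 1) / d : ℝ) : ℂ) else 1)
      = (((γ ^ 2 + (d : ℝ) - 1) / d : ℝ) : ℂ) - 1 + (k : ℂ) := by
    have h4 : ∀ ℓ ∈ Finset.Icc 1 k, (if ℓ = 1 then (((γ ^ 2 + (d : ℝ) - 1) / d : ℝ) : ℂ) else 1)
        = (if ℓ = 1 then (((γ ^ 2 + (d : ℝ) - 1) / d : ℝ) : ℂ) - 1 else 0) + 1 := by
      intro ℓ _; split_ifs <;> ring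
    rw [Finset.sum_congr rfl h4, Finset.sum_add_distrib, Finset.sum_ite_eq',
      if_pos (by rw [Finset.mem_Icc]; omega), Finset.sum_const, Nat.card_Icc, nsmul_eq_mul,
      mul_one]
    simp
  rw [step3]
  push_cast
  field_simp
  ring
/-- `Tr(W_{d,k} ρ_γ) = (γ² − 1)/(d² − 2 + γ² + γ⁻²)`; in particular `W_{d,k}`
detects `ρ_γ` exactly when `0 < γ < 1`. -/
theorem stmt17 (d k : ℕ) [NeZero d] (hd : 3 ≤ d) (hk1 : 1 ≤ k) (hk2 : k ≤ d - 2)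
    (γ : ℝ) (hγ : 0 < γ) :
    Matrix.trace (Wdk d k * rhoGam d γ)
      = (((γ ^ 2 - 1) / ((d : ℝ) ^ 2 - 2 + γ ^ 2 + γ⁻¹ ^ 2) : ℝ) : ℂ) ∧
    ((Matrix.trace (Wdk d k * rhoGam d γ)).re < 0 ↔ γ < 1) := by
  have hN : 0 < (d : ℝ) ^ 2 - 2 + γ ^ 2 + γ⁻¹ ^ 2 := by
    have h1 : (3 : ℝ) ≤ (d : ℝ) := by exact_mod_cast hd
    nlinarith [pow_pos hγ 2, pow_pos (inv_pos.2 hγ) 2]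
  set A : ℂ := (d : ℂ) - 2 + (((γ ^ 2 + (d : ℝ) - 1) / d : ℝ) : ℂ) with hA
  have key : Matrix.trace (Wdk d k * rhoGam d γ)
      = (((γ ^ 2 - 1) / ((d : ℝ) ^ 2 - 2 + γ ^ 2 + γ⁻¹ ^ 2) : ℝ) : ℂ) := by
    rw [rhoGam, Matrix.mul_smul, Matrix.trace_smul]
    have hS : Matrix.trace (Wdk d k * Matrix.of fun p q => Ablk d γ p.1 q.1 p.2 q.2)
        = (γ : ℂ) ^ 2 - 1 := by
      have e1 : Matrix.trace (Wdk d k * Matrix.of fun p q => Ablk d γ p.1 q.1 p.2 q.2)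
          = ∑ i : Fin d, ∑ x : Fin d, ∑ j : Fin d, ∑ y : Fin d,
              Xblk d k i j x y * Ablk d γ j i y x := by
        rw [Matrix.trace]
        simp only [Matrix.diag_apply, Matrix.mul_apply, Wdk, Matrix.of_apply,
          Fintype.sum_prod_type]
      rw [e1]
      have e2 : ∀ i : Fin d, ∑ x : Fin d, ∑ j : Fin d, ∑ y : Fin d,
            Xblk d k i j x y * Ablk d γ j i y x
          = ∑ j : Fin d, ∑ x : Fin d, ∑ y : Fin d,
              Xblk d k i j x y * Ablk d γ j i y x :=
        fun i => Finset.sum_comm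
      rw [Finset.sum_congr rfl fun i _ => e2 i]
      have e3 : ∀ i j : Fin d, ∑ x : Fin d, ∑ y : Fin d,
            Xblk d k i j x y * Ablk d γ j i y x = if i = j then A else -1 := by
        intro i j
        rcases eq_or_ne i j with h | h
        · subst h; rw [if_pos rfl]; exact diag_sum d k hd hk1 hk2 γ i
        · rw [if_neg h]; exact offdiag_sum d k γ i j h
      rw [Finset.sum_congr rfl fun i _ =>
        Finset.sum_congr rfl fun j _ => e3 i j]
      have e4 : ∀ i : Fin d, (∑ j : Fin d, if i = j then A else -1)
          = A + 1 - (d : ℂ) := by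
        intro i
        have h5 : ∀ j : Fin d, (if i = j then A else -1)
            = (if i = j then A + 1 else 0) + (-1) := fun j => by split_ifs <;> ring
        simp only [h5]
        rw [Finset.sum_add_distrib, Finset.sum_ite_eq, if_pos (Finset.mem_univ i),
          Finset.sum_const, Finset.card_univ, Fintype.card_fin, nsmul_eq_mul]
        ring
      rw [Finset.sum_congr rfl fun i _ => e4 i, Finset.sum_const, Finset.card_univ,
        Fintype.card_fin, nsmul_eq_mul, hA]
      have hd0 : ((d : ℝ) : ℂ) ≠ 0 := by simp; omega
      push_cast at hd0 ⊢
      field_simp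
      ring
    rw [hS, smul_eq_mul]
    have hN0 : (((d : ℝ) ^ 2 - 2 + γ ^ 2 + γ⁻¹ ^ 2 : ℝ) : ℂ) ≠ 0 :=
      Complex.ofReal_ne_zero.2 (ne_of_gt hN)
    have hγ0 : ((γ : ℝ) : ℂ) ≠ 0 := by simp; exact ne_of_gt hγ
    push_cast at hN0 ⊢
    field_simp
  refine ⟨key, ?_⟩
  rw [key, Complex.ofReal_re, div_neg_iff]
  constructor
  · rintro (⟨h1, h2⟩ | ⟨h1, h2⟩)
    · linarith
    · nlinarith
  · intro h
    right
    exact ⟨by nlinarith, hN⟩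

end
end

section
/- Let 0 < b < 1, let ρ(b) be the 2⊗4 Horodecki state and W(u) the 8×8 witness family (as specified), so that Tr(W(u)ρ(b)) = (3 − 3b − 6u√(1−b²) + 3u² + 2bu²)/(6 + 42b). Then for real u, Tr(W(u) ρ(b)) < 0 if and only if u₁ < u < u₂', where u₁ = (3√(1−b²) − √(3b(1−b)))/(3+2b) and u₂' = (3√(1−b²) + √(3b(1−b)))/(3+2b); equivalently, Tr(W(u)ρ(b)) < 0 iff (3+2b)u² − 6√(1−b²)u + 3(1−b) < 0. -/
open scoped BigOperators ComplexConjugate ComplexOrder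
open Finset Matrix

noncomputable section

/-- The 2⊗4 Horodecki state `ρ(b)` on `ℂ²⊗ℂ⁴`, written as an 8×8 matrix in the
product basis ordered `(1,1),(1,2),(1,3),(1,4),(2,1),(2,2),(2,3),(2,4)`. -/
def rhoB (b : ℝ) : Matrix (Fin 8) (Fin 8) ℂ :=
  (((7 * b + 1)⁻¹ : ℝ) : ℂ) •
  !![(b : ℂ), 0, 0, 0, 0, (b : ℂ), 0, 0;
     0, (b : ℂ), 0, 0, 0, 0, (b : ℂ), 0;
     0, 0, (b : ℂ), 0, 0, 0, 0, (b : ℂ);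
     0, 0, 0, (b : ℂ), 0, 0, 0, 0;
     0, 0, 0, 0, (((1 + b) / 2 : ℝ) : ℂ), 0, 0, ((Real.sqrt (1 - b ^ 2) / 2 : ℝ) : ℂ);
     (b : ℂ), 0, 0, 0, 0, (b : ℂ), 0, 0;
     0, (b : ℂ), 0, 0, 0, 0, (b : ℂ), 0;
     0, 0, (b : ℂ), 0, ((Real.sqrt (1 - b ^ 2) / 2 : ℝ) : ℂ), 0, 0, (((1 + b) / 2 : ℝ) : ℂ)]

/-- The witness family `W(u)` on `ℂ²⊗ℂ⁴` (Tang map), written as an 8×8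
Hermitian matrix in the same product basis. -/
def Wu (u : ℝ) : Matrix (Fin 8) (Fin 8) ℂ :=
  !![((1 - u ^ 2 / 6 : ℝ) : ℂ), 0, 0, 0, 0, -1, 0, 0;
     0, 1, 0, 0, 0, 0, -2, 0;
     0, 0, 2, 0, (u : ℂ), 0, 0, -2;
     0, 0, 0, 1, 0, 0, 0, 0;
     0, 0, (u : ℂ), 0, ((u ^ 2 : ℝ) : ℂ), 0, 0, ((-u : ℝ) : ℂ);
     -1, 0, 0, 0, 0, 2, 0, 0;
     0, -2, 0, 0, 0, 0, 2, 0;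
     0, 0, -2, 0, ((-u : ℝ) : ℂ), 0, 0, 1]

set_option maxHeartbeats 2000000 in
theorem trace_WuRho (b u : ℝ) (hb0 : 0 < b) :
    Matrix.trace (Wu u * rhoB b) =
      (((3 - 3*b - 6 * Real.sqrt (1 - b^2) * u + (3 + 2*b) * u^2) / (6 + 42*b) : ℝ) : ℂ) := by
  have hc1 : (7*(b:ℂ)+1) ≠ 0 := by exact_mod_cast (by linarith : (7*b+1:ℝ) ≠ 0)
  have hc2 : (6 + 42*(b:ℂ)) ≠ 0 := by exact_mod_cast (by linarith : (6+42*b:ℝ) ≠ 0)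
  simp [Wu, rhoB, Matrix.trace, Matrix.mul_apply, Fin.sum_univ_succ, Matrix.smul_apply]
  push_cast
  rw [eq_div_iff hc2]
  linear_combination (3 - 3*(b:ℂ) - 6*((Real.sqrt (1-b^2):ℝ):ℂ)*(u:ℂ) + (3+2*(b:ℂ))*(u:ℂ)^2) * mul_inv_cancel₀ hc1

/-- For real `u`, `Tr(W(u) ρ(b)) < 0` iff `u₁ < u < u₂'`, with
`u₁ = (3√(1−b²) − √(3b(1−b)))/(3+2b)` and
`u₂' = (3√(1−b²) + √(3b(1−b)))/(3+2b)`; equivalently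
`Tr(W(u)ρ(b)) < 0` iff `(3+2b)u² − 6√(1−b²)u + 3(1−b) < 0`. -/
theorem stmt19 (b : ℝ) (hb0 : 0 < b) (hb1 : b < 1) (u : ℝ) :
    ((Matrix.trace (Wu u * rhoB b)).re < 0 ↔
      ((3 * Real.sqrt (1 - b ^ 2) - Real.sqrt (3 * b * (1 - b))) / (3 + 2 * b) < u ∧
        u < (3 * Real.sqrt (1 - b ^ 2) + Real.sqrt (3 * b * (1 - b))) / (3 + 2 * b))) ∧
    ((Matrix.trace (Wu u * rhoB b)).re < 0 ↔
      (3 + 2 * b) * u ^ 2 - 6 * Real.sqrt (1 - b ^ 2) * u + 3 * (1 - b) < 0) := by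
  have hd : (0:ℝ) < 3 + 2 * b := by linarith
  set s := Real.sqrt (1 - b ^ 2) with hs
  set r := Real.sqrt (3 * b * (1 - b)) with hr
  have hs2 : s ^ 2 = 1 - b ^ 2 := Real.sq_sqrt (by nlinarith)
  have hr2 : r ^ 2 = 3 * b * (1 - b) := Real.sq_sqrt (by nlinarith)
  have hr0 : 0 < r := Real.sqrt_pos.mpr (by nlinarith)
  have htr : (Matrix.trace (Wu u * rhoB b)).re =
      (3 - 3*b - 6 * s * u + (3 + 2*b) * u^2) / (6 + 42*b) := by
    rw [trace_WuRho b u hb0, Complex.ofReal_re]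
  have hQ : (Matrix.trace (Wu u * rhoB b)).re < 0 ↔
      (3 + 2 * b) * u ^ 2 - 6 * s * u + 3 * (1 - b) < 0 := by
    rw [htr, div_neg_iff]
    constructor
    · rintro (⟨_, h⟩ | ⟨h, _⟩) <;> linarith
    · intro h; exact Or.inr ⟨by linarith, by linarith⟩
  refine ⟨hQ.trans ?_, hQ⟩
  rw [div_lt_iff₀ hd, lt_div_iff₀ hd]
  constructor
  · intro h
    constructor
    · nlinarith [sq_nonneg ((3+2*b)*u - 3*s + r)]
    · nlinarith [sq_nonneg ((3+2*b)*u - 3*s - r)]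
  · rintro ⟨h1, h2⟩
    nlinarith [mul_pos (sub_pos.mpr h1) (sub_pos.mpr h2)]

end
end
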